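/- arXiv:1512.01821 — 5 statements merged into one kernel-verified Lean document; each statement's English description precedes it below -/
import Mathlib

section
/- Let G be a graph, O an orientation of G, and e an edge of G. Then e belongs to a directed cut of O if and only if e does not belong to a directed cycle of O. In particular, the set of edges lying on directed cuts of O and the set of edges lying on directed cycles of O partition E(G). -/
open scoped Classical

/-- A multigraph with a fixed reference orientation: each edge `e` has a
source `src e` and a target `tgt e` (the positive direction `e⁺ = (src e, tgt e)`). -/
structure OrGraph (V E : Type) where
  src : E → V
  tgt : E → V

namespace OrGraph

variable {V E : Type} (G : OrGraph V E)

/-- Two vertices are joined by some edge of `S`. -/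
def step (S : Set E) (a b : V) : Prop :=
  ∃ e ∈ S, (G.src e = a ∧ G.tgt e = b) ∨ (G.src e = b ∧ G.tgt e = a)

/-- `κ(S)`: the number of connected components of the spanning subgraph `(V, S)`. -/
noncomputable def kappa (S : Set E) : ℕ :=
  Nat.card (Quot (G.step S))

/-- A cut of `G`: a minimal nonempty edge set whose removal increases the
number of connected components. -/
def IsCut (C : Set E) : Prop :=
  C.Nonempty ∧ G.kappa Cᶜ > G.kappa Set.univ ∧
    ∀ C' : Set E, C' ⊂ C → C'.Nonempty → ¬ (G.kappa C'ᶜ > G.kappa Set.univ)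

/-- A cycle of `G`: a minimal nonempty edge set meeting no cut of `G` in
precisely one element. -/
def IsCycle (C : Set E) : Prop :=
  C.Nonempty ∧ (∀ Cu : Set E, G.IsCut Cu → (Cu ∩ C).ncard ≠ 1) ∧
    ∀ C' : Set E, C' ⊂ C → C'.Nonempty →
      ¬ (∀ Cu : Set E, G.IsCut Cu → (Cu ∩ C').ncard ≠ 1)

/-- Head of edge `e` under orientation `O` (`O e = true` means the reference
direction `src e → tgt e`). -/
def ohead (O : E → Bool) (e : E) : V := if O e then G.tgt e else G.src e

/-- Tail of edge `e` under orientation `O`. -/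
def otail (O : E → Bool) (e : E) : V := if O e then G.src e else G.tgt e

/-- Edge `e` crosses the vertex set `U` (exactly one endpoint in `U`). -/
def crossing (U : Set V) (e : E) : Prop := G.src e ∈ U ↔ G.tgt e ∉ U

/-- A directed cut of the orientation `O`: a cut all of whose edges are
oriented consistently out of some vertex set `U`. -/
def IsDirCut (O : E → Bool) (C : Set E) : Prop :=
  G.IsCut C ∧ ∃ U : Set V, (∀ e, e ∈ C ↔ G.crossing U e) ∧ ∀ e ∈ C, G.otail O e ∈ U

/-- A directed cycle of the orientation `O`: a cycle oriented consistently,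
i.e. in-degree equals out-degree at each vertex within the cycle. -/
def IsDirCycle (O : E → Bool) (C : Set E) : Prop :=
  G.IsCycle C ∧ ∀ v : V,
    {e ∈ C | G.ohead O e = v}.ncard = {e ∈ C | G.otail O e = v}.ncard

section Activities

variable [LinearOrder E]

/-- `Î(S)`: cut active edges of the spanning subgraph `S`. -/
def Iact (S : Set E) : Set E :=
  {e | ∃ C : Set E, G.IsCut C ∧ e ∈ C ∧ (∀ f ∈ C, f ≠ e → f ∉ S) ∧ ∀ f ∈ C, e ≤ f}

/-- `L̂(S)`: cycle active edges of the spanning subgraph `S`. -/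
def Lact (S : Set E) : Set E :=
  {e | ∃ C : Set E, G.IsCycle C ∧ e ∈ C ∧ (∀ f ∈ C, f = e ∨ f ∈ S) ∧ ∀ f ∈ C, e ≤ f}

/-- `I(O)`: cut active edges of the orientation `O`. -/
def Ior (O : E → Bool) : Set E :=
  {e | ∃ C : Set E, G.IsDirCut O C ∧ e ∈ C ∧ ∀ f ∈ C, e ≤ f}

/-- `L(O)`: cycle active edges of the orientation `O`. -/
def Lor (O : E → Bool) : Set E :=
  {e | ∃ C : Set E, G.IsDirCycle O C ∧ e ∈ C ∧ ∀ f ∈ C, e ≤ f}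

end Activities

/-- The Tutte polynomial via the corank-nullity expansion, evaluated in a
commutative ring. -/
noncomputable def tutte [Fintype V] [Fintype E] (R : Type) [CommRing R] (x y : R) : R :=
  ∑ S : Finset E, (x - 1) ^ (G.kappa ↑S - G.kappa Set.univ) *
    (y - 1) ^ (S.card + G.kappa ↑S - Fintype.card V)

/-! ### Fourientations.
A fourientation is `F : E → Bool × Bool`, recording whether `e⁺` resp. `e⁻`
belongs to the fourientation. -/

/-- A potential cut of the fourientation `F`: a directed cut each of whose
edges is unoriented in `F` or oriented in the cut direction (out of `U`). -/
def PotCut (F : E → Bool × Bool) (C : Set E) : Prop :=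
  G.IsCut C ∧ ∃ U : Set V, (∀ e, e ∈ C ↔ G.crossing U e) ∧
    ∀ e ∈ C, (G.src e ∈ U → (F e).2 = false) ∧ (G.src e ∉ U → (F e).1 = false)

/-- A potential cycle of the fourientation `F`, with cyclic direction `dir`:
a consistently directed cycle each of whose edges has its `dir`-direction
present in `F` (so each edge is bioriented or oriented in the cycle direction). -/
def PotCycle (F : E → Bool × Bool) (C : Set E) (dir : E → Bool) : Prop :=
  G.IsCycle C ∧
    (∀ v : V, {e ∈ C | G.ohead dir e = v}.ncard = {e ∈ C | G.otail dir e = v}.ncard) ∧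
    ∀ e ∈ C, (if dir e then (F e).1 else (F e).2) = true

/-- Add the direction `d` of edge `e` to the fourientation `F`. -/
def addDir [DecidableEq E] (F : E → Bool × Bool) (e : E) (d : Bool) : E → Bool × Bool :=
  Function.update F e (if d then (true, (F e).2) else ((F e).1, true))

/-- Remove the direction `d` of edge `e` from the fourientation `F`. -/
def remDir [DecidableEq E] (F : E → Bool × Bool) (e : E) (d : Bool) : E → Bool × Bool :=
  Function.update F e (if d then (false, (F e).2) else ((F e).1, false))

/-- `ᵉO`: toggle the status of the edge `e` in the fourientation `F`. -/
def toggle [DecidableEq E] (F : E → Bool × Bool) (e : E) : E → Bool × Bool :=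
  Function.update F e ((F e).2, (F e).1)

section FourActivities

variable [LinearOrder E]

/-- `I^o(O)`: oriented edges that are minimal in some potential cut. -/
def Io (F : E → Bool × Bool) : Set E :=
  {f | (F f).1 ≠ (F f).2 ∧ ∃ C : Set E, G.PotCut F C ∧ f ∈ C ∧ ∀ g ∈ C, f ≤ g}

/-- `L^o(O)`: oriented edges that are minimal in some potential cycle. -/
def Lo (F : E → Bool × Bool) : Set E :=
  {f | (F f).1 ≠ (F f).2 ∧
    ∃ (C : Set E) (dir : E → Bool), G.PotCycle F C dir ∧ f ∈ C ∧ ∀ g ∈ C, f ≤ g}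

/-- `I^u(O)`: unoriented edges `f` minimal in some potential cut of
`O ∪ {f^{σᵤ(f)}}`. -/
def Iu (σu : E → Bool) (F : E → Bool × Bool) : Set E :=
  {f | F f = (false, false) ∧
    ∃ C : Set E, G.PotCut (addDir F f (σu f)) C ∧ f ∈ C ∧ ∀ g ∈ C, f ≤ g}

/-- `L^b(O)`: bioriented edges `f` minimal in some potential cycle of
`O \ {f^{σ_b(f)}}`. -/
def Lb (σb : E → Bool) (F : E → Bool × Bool) : Set E :=
  {f | F f = (true, true) ∧
    ∃ (C : Set E) (dir : E → Bool),
      G.PotCycle (remDir F f (σb f)) C dir ∧ f ∈ C ∧ ∀ g ∈ C, f ≤ g}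

end FourActivities

/-- The deletion `G − e`. -/
def del (e : E) : OrGraph V {f : E // f ≠ e} :=
  ⟨fun f => G.src f.1, fun f => G.tgt f.1⟩

/-- The contraction `G/e`: identify the endpoints of `e` and remove `e`. -/
def contr (e : E) : OrGraph (Quot (fun a b => a = G.src e ∧ b = G.tgt e)) {f : E // f ≠ e} :=
  ⟨fun f => Quot.mk _ (G.src f.1), fun f => Quot.mk _ (G.tgt f.1)⟩

/-! ### Potential walks in a fourientation. A walk step is a pair `(e, d)` of an
edge and a chosen direction (`d = true` for the reference direction). -/

/-- Tail of the directed edge `(e, d)`. -/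
def ftail (p : E × Bool) : V := if p.2 then G.src p.1 else G.tgt p.1

/-- Head of the directed edge `(e, d)`. -/
def fhead (p : E × Bool) : V := if p.2 then G.tgt p.1 else G.src p.1

/-- The direction `d` of `e` is present in the fourientation `F`. -/
def present (F : E → Bool × Bool) (p : E × Bool) : Prop :=
  (if p.2 then (F p.1).1 else (F p.1).2) = true

/-- A potential walk of the fourientation `F` from `a` to `b`: each step uses
a direction present in `F` (so each edge is bioriented or oriented
consistently with the walk). -/
def IsPWalk (F : E → Bool × Bool) : V → List (E × Bool) → V → Prop
  | a, [], b => a = b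
  | a, p :: rest, b => G.ftail p = a ∧ present F p ∧ IsPWalk F (G.fhead p) rest b

/-- A potential path: a potential walk visiting pairwise distinct vertices. -/
def IsPPath (F : E → Bool × Bool) (a : V) (w : List (E × Bool)) (b : V) : Prop :=
  G.IsPWalk F a w b ∧ (a :: w.map G.fhead).Nodup

end OrGraph
/-! ### Auxiliary development -/

set_option linter.unusedSectionVars false

section Aux
variable {V E : Type} {G : OrGraph V E}

/-- `f` joins `a` and `b` (in either direction). -/
def OrGraph.joins (G : OrGraph V E) (f : E) (a b : V) : Prop :=
  (G.src f = a ∧ G.tgt f = b) ∨ (G.src f = b ∧ G.tgt f = a)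

lemma joins_symm {f : E} {a b : V} (h : G.joins f a b) : G.joins f b a := h.symm

lemma joins_head_tail (O : E → Bool) (f : E) : G.joins f (G.otail O f) (G.ohead O f) := by
  unfold OrGraph.joins OrGraph.otail OrGraph.ohead
  by_cases h : O f <;> simp [h]

lemma joins_eq {f : E} {a b a' b' : V} (h : G.joins f a b) (h' : G.joins f a' b') :
    (a = a' ∧ b = b') ∨ (a = b' ∧ b = a') := by
  obtain ⟨h1, h2⟩ | ⟨h1, h2⟩ := h <;> obtain ⟨h3, h4⟩ | ⟨h3, h4⟩ := h' <;>
    subst h1 <;> subst h2 <;> simp_all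

lemma step_iff {S : Set E} {a b : V} : G.step S a b ↔ ∃ f ∈ S, G.joins f a b := Iff.rfl

lemma crossing_of_joins {Y : Set V} {f : E} {a b : V} (h : G.joins f a b)
    (ha : a ∈ Y) (hb : b ∉ Y) : G.crossing Y f := by
  obtain ⟨h1, h2⟩ | ⟨h1, h2⟩ := h <;> subst h1 <;> subst h2 <;>
    unfold OrGraph.crossing <;> tauto

lemma crossing_elim {Y : Set V} {f : E} (h : G.crossing Y f) :
    ∃ a b, G.joins f a b ∧ a ∈ Y ∧ b ∉ Y := by
  unfold OrGraph.crossing at h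
  by_cases hs : G.src f ∈ Y
  · exact ⟨G.src f, G.tgt f, Or.inl ⟨rfl, rfl⟩, hs, h.mp hs⟩
  · refine ⟨G.tgt f, G.src f, Or.inr ⟨rfl, rfl⟩, ?_, hs⟩
    by_contra ht; exact hs (h.mpr ht)

lemma not_crossing_iff_of_joins {Y : Set V} {f : E} {a b : V} (h : G.joins f a b)
    (hnc : ¬ G.crossing Y f) : (a ∈ Y ↔ b ∈ Y) := by
  obtain ⟨h1, h2⟩ | ⟨h1, h2⟩ := h <;> subst h1 <;> subst h2 <;>
    unfold OrGraph.crossing at hnc <;> tauto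

lemma crossing_cases_of_joins {Y : Set V} {f : E} {a b : V} (h : G.joins f a b)
    (hc : G.crossing Y f) : (a ∈ Y ∧ b ∉ Y) ∨ (a ∉ Y ∧ b ∈ Y) := by
  obtain ⟨h1, h2⟩ | ⟨h1, h2⟩ := h <;> subst h1 <;> subst h2 <;>
    unfold OrGraph.crossing at hc <;> tauto

end Aux
section Reach
variable {V E : Type} {G : OrGraph V E}

/-- reachability through edges of `S`. -/
abbrev OrGraph.reach {V E : Type} (G : OrGraph V E) (S : Set E) (a b : V) : Prop :=
  Relation.EqvGen (G.step S) a b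

lemma step_symm {S : Set E} {a b : V} (h : G.step S a b) : G.step S b a := by
  obtain ⟨e, he, h | h⟩ := h
  · exact ⟨e, he, Or.inr h⟩
  · exact ⟨e, he, Or.inl h⟩

lemma step_mono {S T : Set E} (hST : S ⊆ T) {a b : V} (h : G.step S a b) : G.step T a b := by
  obtain ⟨e, he, h⟩ := h; exact ⟨e, hST he, h⟩

lemma reach_mono {S T : Set E} (hST : S ⊆ T) {a b : V} (h : G.reach S a b) :
    G.reach T a b :=
  Relation.EqvGen.mono (fun _ _ hs => step_mono hST hs) _ _ h

lemma reach_closed {S : Set E} (P : V → Prop)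
    (hP : ∀ a b, G.step S a b → (P a ↔ P b)) {a b : V} (h : G.reach S a b) :
    P a ↔ P b := by
  induction h with
  | rel a b h => exact hP a b h
  | refl a => rfl
  | symm a b _ ih => exact ih.symm
  | trans a b c _ _ ih1 ih2 => exact ih1.trans ih2

lemma reach_of_step {S : Set E} {a b : V} (h : G.step S a b) : G.reach S a b :=
  Relation.EqvGen.rel _ _ h

lemma reach_refl {S : Set E} (a : V) : G.reach S a a := Relation.EqvGen.refl a

lemma reach_symm {S : Set E} {a b : V} (h : G.reach S a b) : G.reach S b a :=
  Relation.EqvGen.symm _ _ h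

lemma reach_trans {S : Set E} {a b c : V} (h1 : G.reach S a b) (h2 : G.reach S b c) :
    G.reach S a c := Relation.EqvGen.trans _ _ _ h1 h2

lemma reach_closure {S T : Set E} (h : ∀ a b, G.step T a b → G.reach S a b)
    {a b : V} (hr : G.reach T a b) : G.reach S a b := by
  induction hr with
  | rel a b h' => exact h a b h'
  | refl a => exact Relation.EqvGen.refl a
  | symm a b _ ih => exact Relation.EqvGen.symm _ _ ih
  | trans a b c _ _ ih1 ih2 => exact Relation.EqvGen.trans _ _ _ ih1 ih2

variable [Fintype V]

noncomputable instance (S : Set E) : Fintype (Quot (G.step S)) := by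
  have : Finite (Quot (G.step S)) := Finite.of_surjective (Quot.mk _) Quot.mk_surjective
  exact Fintype.ofFinite _

lemma kappa_le {S T : Set E} (hST : S ⊆ T) : G.kappa T ≤ G.kappa S := by
  have hsurj : Function.Surjective
      (Quot.map id (fun a b h => step_mono hST h) : Quot (G.step S) → Quot (G.step T)) := by
    intro x; induction x using Quot.ind with
    | _ a => exact ⟨Quot.mk _ a, rfl⟩
  exact Nat.card_le_card_of_surjective _ hsurj

lemma kappa_eq_of {S T : Set E} (hST : S ⊆ T)
    (h : ∀ a b, G.step T a b → G.reach S a b) : G.kappa S = G.kappa T := by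
  apply Nat.card_eq_of_bijective
    (Quot.map id (fun a b hs => step_mono hST hs) : Quot (G.step S) → Quot (G.step T))
  constructor
  · intro x y
    induction x using Quot.ind with
    | _ a =>
    induction y using Quot.ind with
    | _ b =>
    intro hxy
    have h2 : Quot.mk (G.step T) a = Quot.mk (G.step T) b := hxy
    rw [Quot.eq] at h2 ⊢
    exact reach_closure h h2
  · intro x; induction x using Quot.ind with
    | _ a => exact ⟨Quot.mk _ a, rfl⟩

lemma kappa_lt_of {S T : Set E} (hST : S ⊆ T) {a b : V}
    (hT : G.reach T a b) (hS : ¬ G.reach S a b) : G.kappa T < G.kappa S := by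
  have hnc : G.kappa T = Fintype.card (Quot (G.step T)) := Nat.card_eq_fintype_card
  have hnc' : G.kappa S = Fintype.card (Quot (G.step S)) := Nat.card_eq_fintype_card
  rw [hnc, hnc']
  apply Fintype.card_lt_of_surjective_not_injective
    (Quot.map id (fun a b hs => step_mono hST hs) : Quot (G.step S) → Quot (G.step T))
  · intro x; induction x using Quot.ind with
    | _ a => exact ⟨Quot.mk _ a, rfl⟩
  · intro hinj
    have h1 : (Quot.map id (fun a b hs => step_mono (G := G) hST hs) (Quot.mk _ a) :
        Quot (G.step T)) = Quot.map id (fun a b hs => step_mono hST hs) (Quot.mk _ b) := by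
      show Quot.mk (G.step T) a = Quot.mk (G.step T) b
      rw [Quot.eq]; exact hT
    have h2 : Quot.mk (G.step S) a = Quot.mk (G.step S) b := hinj h1
    rw [Quot.eq] at h2
    exact hS h2

end Reach
section Bond
variable {V E : Type} [Fintype V] [Fintype E] {G : OrGraph V E}

/-- Bond extraction: from any crossing edge `h` of a vertex set `X` we can
extract a minimal cut `C₂` consisting of `X`-crossing edges, of the form
`crossing Y`, with each edge of `C₂` joining `Y ∩ Xᶜ` to `Yᶜ ∩ X`. -/
lemma bond (X : Set V) (h : E) (hcr : G.crossing X h) :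
    ∃ (C₂ : Set E) (Y : Set V), G.IsCut C₂ ∧ h ∈ C₂ ∧ (∀ f ∈ C₂, G.crossing X f) ∧
      (∀ f, f ∈ C₂ ↔ G.crossing Y f) ∧
      (∀ f ∈ C₂, ∃ a b, G.joins f a b ∧ a ∈ Y ∧ b ∉ Y ∧ a ∉ X ∧ b ∈ X) := by
  obtain ⟨p, q, hpq, hpX, hqX⟩ := crossing_elim hcr
  set crX : Set E := {f | G.crossing X f} with hcrX
  -- membership in X is invariant along non-crossing edges
  have hXinv : ∀ a b, G.step crXᶜ a b → (a ∈ X ↔ b ∈ X) := by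
    intro a b ⟨f, hf, hj⟩
    exact not_crossing_iff_of_joins hj hf
  set U' : Set V := {x | G.reach crXᶜ p x} with hU'
  have hU'X : U' ⊆ X := fun x hx => (reach_closed (· ∈ X) hXinv hx).mp hpX
  set C₁ : Set E := {f | G.crossing U' f} with hC₁
  have hC₁X : C₁ ⊆ crX := by
    intro f hf
    obtain ⟨a, b, hj, ha, hb⟩ := crossing_elim hf
    by_contra hfX
    exact hb (reach_trans ha (reach_of_step ⟨f, hfX, hj⟩))
  have hpU' : p ∈ U' := reach_refl p
  have hqU' : q ∉ U' := fun hq => hqX (hU'X hq)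
  have hhC₁ : h ∈ C₁ := crossing_of_joins hpq hpU' hqU'
  have hU'inv : ∀ a b, G.step C₁ᶜ a b → (a ∈ U' ↔ b ∈ U') := by
    intro a b ⟨f, hf, hj⟩
    exact not_crossing_iff_of_joins hj hf
  have hC₁sub : (crXᶜ : Set E) ⊆ C₁ᶜ := Set.compl_subset_compl.mpr hC₁X
  have hU'comp : ∀ x, x ∈ U' ↔ G.reach C₁ᶜ p x := by
    intro x
    constructor
    · exact fun hx => reach_mono hC₁sub hx
    · exact fun hx => (reach_closed (· ∈ U') hU'inv hx).mp hpU'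
  set W : Set V := {x | G.reach C₁ᶜ q x} with hW
  have hWU' : ∀ x, x ∈ W → x ∉ U' := by
    intro x hx hxU'
    exact hqU' ((hU'comp q).mpr (reach_trans ((hU'comp x).mp hxU') (reach_symm hx)))
  set C₂ : Set E := {f | G.crossing W f} with hC₂
  have hC₂C₁ : C₂ ⊆ C₁ := by
    intro f hf
    obtain ⟨a, b, hj, ha, hb⟩ := crossing_elim hf
    by_contra hfC₁
    exact hb (reach_trans ha (reach_of_step ⟨f, hfC₁, hj⟩))
  have hqW : q ∈ W := reach_refl q
  have hpW : p ∉ W := fun hp => hWU' p hp hpU'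
  have hhC₂ : h ∈ C₂ := crossing_of_joins (joins_symm hpq) hqW hpW
  have hend : ∀ f ∈ C₂, ∃ a b, G.joins f a b ∧ a ∈ W ∧ b ∉ W ∧ a ∉ X ∧ b ∈ U' := by
    intro f hf
    obtain ⟨a, b, hj, ha, hb⟩ := crossing_elim hf
    have hfC₁ : f ∈ C₁ := hC₂C₁ hf
    have haU' : a ∉ U' := hWU' a ha
    have hbU' : b ∈ U' := by
      rcases crossing_cases_of_joins hj hfC₁ with ⟨h1, _⟩ | ⟨_, h2⟩
      · exact absurd h1 haU'
      · exact h2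
    have haX : a ∉ X := by
      intro haX
      have hfX : f ∈ crX := hC₁X hfC₁
      rcases crossing_cases_of_joins hj hfX with ⟨_, h2⟩ | ⟨h1, _⟩
      · exact h2 (hU'X hbU')
      · exact h1 haX
    exact ⟨a, b, hj, ha, hb, haX, hbU'⟩
  have hWinv : ∀ a b, G.step C₂ᶜ a b → (a ∈ W ↔ b ∈ W) := by
    intro a b ⟨f, hf, hj⟩
    exact not_crossing_iff_of_joins hj hf
  -- C₂ is a cut
  have hcut : G.IsCut C₂ := by
    refine ⟨⟨h, hhC₂⟩, ?_, ?_⟩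
    · have : G.kappa Set.univ < G.kappa C₂ᶜ := by
        refine kappa_lt_of (Set.subset_univ _) (a := q) (b := p)
          (reach_of_step ⟨h, trivial, joins_symm hpq⟩) ?_
        intro hr
        exact hpW ((reach_closed (· ∈ W) hWinv hr).mp hqW)
      exact this
    · intro C' hC' hC'ne
      obtain ⟨g, hgC₂, hgC'⟩ := Set.exists_of_ssubset hC'
      have hC'C₂ : C' ⊆ C₂ := hC'.1
      have hC'C₁ : (C₁ᶜ : Set E) ⊆ C'ᶜ :=
        Set.compl_subset_compl.mpr (hC'C₂.trans hC₂C₁)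
      have hkeq : G.kappa C'ᶜ = G.kappa Set.univ := by
        apply kappa_eq_of (Set.subset_univ _)
        rintro a b ⟨f, -, hj⟩
        by_cases hfC' : f ∈ C'
        · obtain ⟨af, bf, hjf, hafW, _, _, hbfU'⟩ := hend f (hC'C₂ hfC')
          obtain ⟨ag, bg, hjg, hagW, _, _, hbgU'⟩ := hend g hgC₂
          have r1 : G.reach C'ᶜ af ag :=
            reach_mono hC'C₁ (reach_trans (reach_symm hafW) hagW)
          have r2 : G.reach C'ᶜ ag bg := reach_of_step ⟨g, hgC', hjg⟩
          have r3 : G.reach C'ᶜ bg bf := by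
            have h1 : G.reach crXᶜ p bg := hbgU'
            have h2 : G.reach crXᶜ p bf := hbfU'
            exact reach_mono (hC₁sub.trans hC'C₁) (reach_trans (reach_symm h1) h2)
          have rf : G.reach C'ᶜ af bf := reach_trans r1 (reach_trans r2 r3)
          rcases joins_eq hj hjf with ⟨h1, h2⟩ | ⟨h1, h2⟩
          · subst h1; subst h2; exact rf
          · subst h1; subst h2; exact reach_symm rf
        · exact reach_of_step ⟨f, hfC', hj⟩
      rw [hkeq]
      exact lt_irrefl _
  exact ⟨C₂, W, hcut, hhC₂, fun f hf => hC₁X (hC₂C₁ hf), fun f => Iff.rfl,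
    fun f hf => by
      obtain ⟨a, b, hj, h1, h2, h3, h4⟩ := hend f hf
      exact ⟨a, b, hj, h1, h2, h3, hU'X h4⟩⟩

end Bond
section DPath
variable {V E : Type} {G : OrGraph V E} {O : E → Bool}

/-- A directed walk from `a` to `b` along the edge list `l`. -/
def OrGraph.dpath (G : OrGraph V E) (O : E → Bool) : V → List E → V → Prop
  | a, [], b => a = b
  | a, f :: l, b => G.otail O f = a ∧ OrGraph.dpath G O (G.ohead O f) l b

lemma dpath_nil {a b : V} (h : G.dpath O a [] b) : a = b := h

lemma dpath_append {a b : V} {l1 l2 : List E} :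
    G.dpath O a (l1 ++ l2) b ↔ ∃ c, G.dpath O a l1 c ∧ G.dpath O c l2 b := by
  induction l1 generalizing a with
  | nil =>
    constructor
    · exact fun h => ⟨a, rfl, h⟩
    · rintro ⟨c, hc, h⟩; cases (dpath_nil hc); exact h
  | cons f l ih =>
    constructor
    · rintro ⟨hf, h⟩
      obtain ⟨c, h1, h2⟩ := ih.mp h
      exact ⟨c, ⟨hf, h1⟩, h2⟩
    · rintro ⟨c, ⟨hf, h1⟩, h2⟩
      exact ⟨hf, ih.mpr ⟨c, h1, h2⟩⟩

lemma dpath_last_mem {a b : V} {l : List E} (h : G.dpath O a l b) :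
    b ∈ a :: l.map (G.ohead O) := by
  induction l generalizing a with
  | nil => cases (dpath_nil h); exact List.mem_singleton.mpr rfl
  | cons f l ih =>
    obtain ⟨hf, h⟩ := h
    have := ih h
    simp only [List.map_cons, List.mem_cons] at this ⊢
    tauto

lemma dpath_tails_eq {a b : V} {l : List E} (h : G.dpath O a l b) :
    a :: l.map (G.ohead O) = l.map (G.otail O) ++ [b] := by
  induction l generalizing a with
  | nil => cases (dpath_nil h); rfl
  | cons f l ih =>
    obtain ⟨hf, h⟩ := h
    simp only [List.map_cons, List.cons_append]
    rw [hf]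
    exact congrArg (a :: ·) (ih h)

lemma dpath_tail_mem {a b : V} {l : List E} (h : G.dpath O a l b) {f : E} (hf : f ∈ l) :
    G.otail O f ∈ a :: l.map (G.ohead O) := by
  rw [dpath_tails_eq h]
  exact List.mem_append_left _ (List.mem_map_of_mem hf)

lemma dpath_reach {S : Set E} {a b : V} {l : List E} (h : G.dpath O a l b)
    (hS : ∀ f ∈ l, f ∈ S) : G.reach S a b := by
  induction l generalizing a with
  | nil => cases (dpath_nil h); exact reach_refl _
  | cons f l ih =>
    obtain ⟨hf, h⟩ := h
    refine reach_trans ?_ (ih h (fun g hg => hS g (List.mem_cons_of_mem _ hg)))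
    exact reach_of_step ⟨f, hS f (List.mem_cons_self), hf ▸ joins_head_tail O f⟩

lemma dpath_extract {b : V} : ∀ (n : ℕ) (a : V) (l : List E), l.length ≤ n →
    G.dpath O a l b → ∃ l', G.dpath O a l' b ∧ (a :: l'.map (G.ohead O)).Nodup ∧
      ∀ x ∈ l'.map (G.ohead O), x ∈ l.map (G.ohead O) := by
  intro n
  induction n with
  | zero =>
    intro a l hl h
    rw [Nat.le_zero, List.length_eq_zero_iff] at hl
    subst hl
    cases (dpath_nil h)
    exact ⟨[], rfl, List.nodup_singleton _, by simp⟩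
  | succ n ih =>
    intro a l hl h
    by_cases h1 : a ∈ l.map (G.ohead O)
    · -- chop off everything up to the occurrence of `a`
      obtain ⟨f, hfl, hfa⟩ := List.mem_map.mp h1
      obtain ⟨s, t, rfl⟩ := List.append_of_mem hfl
      obtain ⟨c, hc1, hft, hc2⟩ := dpath_append.mp h
      rw [hfa] at hc2
      have hlen : t.length ≤ n := by
        have := hl; simp only [List.length_append, List.length_cons] at this; omega
      obtain ⟨l', hl'1, hl'2, hl'3⟩ := ih a t hlen hc2
      exact ⟨l', hl'1, hl'2, fun x hx => by
        simp only [List.map_append, List.map_cons, List.mem_append, List.mem_cons]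
        exact Or.inr (Or.inr (hl'3 x hx))⟩
    · by_cases h2 : (l.map (G.ohead O)).Nodup
      · exact ⟨l, h, List.nodup_cons.mpr ⟨h1, h2⟩, fun x hx => hx⟩
      · -- l nonempty, duplicates inside
        cases l with
        | nil => simp at h2
        | cons f r =>
          obtain ⟨hf, hr⟩ := h
          by_cases h3 : G.ohead O f ∈ r.map (G.ohead O)
          · obtain ⟨f', hf'r, hf'e⟩ := List.mem_map.mp h3
            obtain ⟨s, t, rfl⟩ := List.append_of_mem hf'r
            obtain ⟨c, hc1, hft, hc2⟩ := dpath_append.mp hr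
            rw [hf'e] at hc2
            have hd : G.dpath O a (f :: t) b := ⟨hf, hc2⟩
            have hlen : (f :: t).length ≤ n := by
              have := hl
              simp only [List.length_append, List.length_cons] at this ⊢; omega
            obtain ⟨l', hl'1, hl'2, hl'3⟩ := ih a (f :: t) hlen hd
            refine ⟨l', hl'1, hl'2, fun x hx => ?_⟩
            have := hl'3 x hx
            simp only [List.map_cons, List.map_append, List.mem_cons, List.mem_append] at this ⊢
            tauto
          · have hlen : r.length ≤ n := by
              have := hl; simp only [List.length_cons] at this; omega
            obtain ⟨l', hl'1, hl'2, hl'3⟩ := ih (G.ohead O f) r hlen hr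
            refine ⟨f :: l', ⟨hf, hl'1⟩, ?_, ?_⟩
            · refine List.nodup_cons.mpr ⟨?_, hl'2⟩
              intro ha
              simp only [List.map_cons, List.mem_cons] at ha h1
              rcases ha with ha | ha
              · exact h1 (Or.inl ha)
              · exact h1 (Or.inr (hl'3 a ha))
            · intro x hx
              simp only [List.map_cons, List.mem_cons] at hx ⊢
              rcases hx with hx | hx
              · exact Or.inl hx
              · exact Or.inr (hl'3 x hx)

end DPath
section Cycle
variable {V E : Type} [Fintype V] [Fintype E] {G : OrGraph V E} {O : E → Bool}

lemma reach_of_joins_of_reach {S : Set E} {f : E} {a b : V} (hj : G.joins f a b)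
    {a' b' : V} (hj' : G.joins f a' b') (h : G.reach S a' b') : G.reach S a b := by
  rcases joins_eq hj hj' with ⟨h1, h2⟩ | ⟨h1, h2⟩
  · subst h1; subst h2; exact h
  · subst h1; subst h2; exact reach_symm h

lemma cycle_counts {v u : V} {l : List E} {e : E} (hdp : G.dpath O v l u)
    (hnd : (v :: l.map (G.ohead O)).Nodup)
    (hte : G.otail O e = u) (hhe : G.ohead O e = v) (x : V) :
    {f ∈ {f | f = e ∨ f ∈ l} | G.ohead O f = x}.ncard =
      {f ∈ {f | f = e ∨ f ∈ l} | G.otail O f = x}.ncard := by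
  have hts_eq : v :: l.map (G.ohead O) = l.map (G.otail O) ++ [u] := dpath_tails_eq hdp
  have hv_nh : v ∉ l.map (G.ohead O) := (List.nodup_cons.mp hnd).1
  have hndh : (l.map (G.ohead O)).Nodup := (List.nodup_cons.mp hnd).2
  have hel : e ∉ l := fun h => hv_nh (hhe ▸ List.mem_map_of_mem h)
  have hndts : (l.map (G.otail O) ++ [u]).Nodup := hts_eq ▸ hnd
  have hndt : (l.map (G.otail O)).Nodup := (List.nodup_append.mp hndts).1
  have hu_nt : u ∉ l.map (G.otail O) := fun h =>
    (List.nodup_append.mp hndts).2.2 u h u (List.mem_singleton.mpr rfl) rfl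
  have hinjh := List.inj_on_of_nodup_map hndh
  have hinjt := List.inj_on_of_nodup_map hndt
  by_cases hx : x ∈ v :: l.map (G.ohead O)
  · have hA : ∃ g, {f ∈ {f | f = e ∨ f ∈ l} | G.ohead O f = x} = {g} := by
      rcases List.mem_cons.mp hx with rfl | hx'
      · refine ⟨e, ?_⟩
        ext g
        simp only [Set.mem_setOf_eq, Set.mem_singleton_iff]
        constructor
        · rintro ⟨hg | hg, hgh⟩
          · exact hg
          · exact absurd (hgh ▸ List.mem_map_of_mem hg) hv_nh
        · rintro rfl; exact ⟨Or.inl rfl, hhe⟩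
      · obtain ⟨f₀, hf₀l, hf₀x⟩ := List.mem_map.mp hx'
        refine ⟨f₀, ?_⟩
        ext g
        simp only [Set.mem_setOf_eq, Set.mem_singleton_iff]
        constructor
        · rintro ⟨hg | hg, hgh⟩
          · subst hg
            exact absurd (by rw [← hgh, hhe] : x = v) (fun hxv => hv_nh (hxv ▸ hx'))
          · exact hinjh hg hf₀l (hgh.trans hf₀x.symm)
        · rintro rfl; exact ⟨Or.inr hf₀l, hf₀x⟩
    have hB : ∃ g, {f ∈ {f | f = e ∨ f ∈ l} | G.otail O f = x} = {g} := by
      have hx2 : x ∈ l.map (G.otail O) ++ [u] := hts_eq ▸ hx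
      rcases List.mem_append.mp hx2 with hx' | hx'
      · obtain ⟨f₀, hf₀l, hf₀x⟩ := List.mem_map.mp hx'
        refine ⟨f₀, ?_⟩
        ext g
        simp only [Set.mem_setOf_eq, Set.mem_singleton_iff]
        constructor
        · rintro ⟨hg | hg, hgt⟩
          · subst hg
            exact absurd (by rw [← hgt, hte] : x = u) (fun hxu => hu_nt (hxu ▸ hx'))
          · exact hinjt hg hf₀l (hgt.trans hf₀x.symm)
        · rintro rfl; exact ⟨Or.inr hf₀l, hf₀x⟩
      · have hxu : x = u := List.mem_singleton.mp hx'
        subst hxu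
        refine ⟨e, ?_⟩
        ext g
        simp only [Set.mem_setOf_eq, Set.mem_singleton_iff]
        constructor
        · rintro ⟨hg | hg, hgt⟩
          · exact hg
          · exact absurd (hgt ▸ List.mem_map_of_mem hg) hu_nt
        · rintro rfl; exact ⟨Or.inl rfl, hte⟩
    obtain ⟨g1, hg1⟩ := hA
    obtain ⟨g2, hg2⟩ := hB
    rw [hg1, hg2, Set.ncard_singleton, Set.ncard_singleton]
  · have hA : {f ∈ {f | f = e ∨ f ∈ l} | G.ohead O f = x} = ∅ := by
      ext g
      simp only [Set.mem_setOf_eq, Set.mem_empty_iff_false, iff_false, not_and]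
      rintro (hg | hg) hgh
      · exact hx (hgh ▸ hg ▸ (hhe ▸ List.mem_cons_self (a := v) : G.ohead O e ∈ v :: l.map (G.ohead O)))
      · exact hx (hgh ▸ List.mem_cons_of_mem _ (List.mem_map_of_mem hg))
    have hB : {f ∈ {f | f = e ∨ f ∈ l} | G.otail O f = x} = ∅ := by
      ext g
      simp only [Set.mem_setOf_eq, Set.mem_empty_iff_false, iff_false, not_and]
      rintro (hg | hg) hgt
      · exact hx (hgt ▸ hg ▸ (hte ▸ dpath_last_mem hdp : G.otail O e ∈ v :: l.map (G.ohead O)))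
      · exact hx (hgt ▸ dpath_tail_mem hdp hg)
    rw [hA, hB]

end Cycle
section Cycle2
variable {V E : Type} [Fintype V] [Fintype E] {G : OrGraph V E} {O : E → Bool}

lemma dpath_cons {a b : V} {f : E} {l : List E} :
    G.dpath O a (f :: l) b ↔ (G.otail O f = a ∧ G.dpath O (G.ohead O f) l b) := Iff.rfl

lemma closed_reach {v u : V} {l : List E} {e : E} (hdp : G.dpath O v l u)
    (hnd : (v :: l.map (G.ohead O)).Nodup)
    (hte : G.otail O e = u) (hhe : G.ohead O e = v) {S : Set E} {g : E}
    (hg : g = e ∨ g ∈ l) (hS : ∀ f, (f = e ∨ f ∈ l) → f ≠ g → f ∈ S) :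
    G.reach S (G.src g) (G.tgt g) := by
  have hv_nh : v ∉ l.map (G.ohead O) := (List.nodup_cons.mp hnd).1
  have hel : e ∉ l := fun h => hv_nh (hhe ▸ List.mem_map_of_mem h)
  have hndl : l.Nodup := ((List.nodup_cons.mp hnd).2).of_map
  rcases hg with rfl | hgl
  · have hr : G.reach S v u :=
      dpath_reach hdp (fun f hf => hS f (Or.inr hf) (fun h => hel (h ▸ hf)))
    exact reach_of_joins_of_reach (Or.inl ⟨rfl, rfl⟩)
      (hte ▸ hhe ▸ joins_head_tail O g) (reach_symm hr)
  · obtain ⟨s, t, rfl⟩ := List.append_of_mem hgl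
    obtain ⟨c, h1, h2⟩ := dpath_append.mp hdp
    rw [dpath_cons] at h2
    obtain ⟨hc, h2'⟩ := h2
    obtain ⟨hgs, hgt⟩ : g ∉ s ∧ g ∉ t := by
      obtain ⟨hn1, hn2, hdisj⟩ := List.nodup_append.mp hndl
      exact ⟨fun h => hdisj g h g (List.mem_cons_self) rfl, (List.nodup_cons.mp hn2).1⟩
    have hes : e ∉ s := fun h => hel (List.mem_append_left _ h)
    have het : e ∉ t := fun h => hel (List.mem_append_right _ (List.mem_cons_of_mem _ h))
    have r1 : G.reach S (G.ohead O g) u := dpath_reach h2' (fun f hf =>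
      hS f (Or.inr (List.mem_append_right _ (List.mem_cons_of_mem _ hf)))
        (fun h => hgt (h ▸ hf)))
    have r2 : G.reach S u v := reach_of_step
      ⟨e, hS e (Or.inl rfl) (fun h => hel (by
          rw [h]; exact List.mem_append_right _ (List.mem_cons_self))), by
        exact hte ▸ hhe ▸ joins_head_tail O e⟩
    have r3 : G.reach S v c := dpath_reach h1 (fun f hf =>
      hS f (Or.inr (List.mem_append_left _ hf)) (fun h => hgs (h ▸ hf)))
    have rr : G.reach S (G.ohead O g) (G.otail O g) :=
      hc ▸ (reach_trans r1 (reach_trans r2 r3))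
    exact reach_of_joins_of_reach (Or.inl ⟨rfl, rfl⟩)
      (joins_symm (joins_head_tail O g)) rr

lemma cycle_cut_meet {v u : V} {l : List E} {e : E} (hdp : G.dpath O v l u)
    (hnd : (v :: l.map (G.ohead O)).Nodup)
    (hte : G.otail O e = u) (hhe : G.ohead O e = v) :
    ∀ Cu, G.IsCut Cu → (Cu ∩ {f | f = e ∨ f ∈ l}).ncard ≠ 1 := by
  intro Cu hCu hone
  obtain ⟨g, hg⟩ := Set.ncard_eq_one.mp hone
  have hgm : g ∈ Cu ∩ {f | f = e ∨ f ∈ l} := by rw [hg]; rfl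
  have hgCu : g ∈ Cu := hgm.1
  have hgD : g = e ∨ g ∈ l := hgm.2
  have hreach : G.reach Cuᶜ (G.src g) (G.tgt g) := by
    refine closed_reach hdp hnd hte hhe hgD ?_
    intro f hfD hfg hfCu
    exact hfg (by have : f ∈ Cu ∩ {f | f = e ∨ f ∈ l} := ⟨hfCu, hfD⟩; rw [hg] at this; exact this)
  by_cases hCueq : Cu = {g}
  · subst hCueq
    have heq : G.kappa ({g} : Set E)ᶜ = G.kappa Set.univ := by
      apply kappa_eq_of (Set.subset_univ _)
      rintro a b ⟨f, -, hj⟩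
      by_cases hf : f = g
      · subst hf
        exact reach_of_joins_of_reach hj (Or.inl ⟨rfl, rfl⟩) hreach
      · exact reach_of_step ⟨f, hf, hj⟩
    have := hCu.2.1
    rw [heq] at this
    exact lt_irrefl _ this
  · have hne : (Cu \ {g}).Nonempty := by
      by_contra hcon
      rw [Set.not_nonempty_iff_eq_empty, Set.diff_eq_empty] at hcon
      exact hCueq (Set.Subset.antisymm hcon (by simpa using hgCu))
    have hss : Cu \ {g} ⊂ Cu :=
      ⟨Set.diff_subset, fun hsub => (hsub hgCu).2 rfl⟩
    have heq : G.kappa Cuᶜ = G.kappa (Cu \ {g})ᶜ := by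
      apply kappa_eq_of (Set.compl_subset_compl.mpr Set.diff_subset)
      rintro a b ⟨f, hf, hj⟩
      by_cases hfCu : f ∈ Cu
      · have hfg : f = g := by
          by_contra hcon
          exact hf ⟨hfCu, hcon⟩
        subst hfg
        exact reach_of_joins_of_reach hj (Or.inl ⟨rfl, rfl⟩) hreach
      · exact reach_of_step ⟨f, hfCu, hj⟩
    exact hCu.2.2 (Cu \ {g}) hss hne (heq ▸ hCu.2.1)

lemma cut_exists {a b : V} {l : List E} (hdp : G.dpath O a l b)
    (hnd : (a :: l.map (G.ohead O)).Nodup) (D' : Set E) (hD'l : ∀ f ∈ D', f ∈ l)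
    {h₀ : E} (hh₀ : h₀ ∈ D') :
    ∃ Cu, G.IsCut Cu ∧ Cu ∩ D' = {h₀} := by
  obtain ⟨s, t, rfl⟩ := List.append_of_mem (hD'l h₀ hh₀)
  obtain ⟨c, h1, h2⟩ := dpath_append.mp hdp
  rw [dpath_cons] at h2
  obtain ⟨hc, h2'⟩ := h2
  set X₀ : Set V := {x | x ∈ G.ohead O h₀ :: t.map (G.ohead O)} with hX₀
  have hnd' : ((a :: s.map (G.ohead O)) ++ (G.ohead O h₀ :: t.map (G.ohead O))).Nodup := by
    rw [List.cons_append]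
    simpa [List.map_append] using hnd
  obtain ⟨hn1, hn2, hdisj⟩ := List.nodup_append.mp hnd'
  have hcL1 : c ∈ a :: s.map (G.ohead O) := dpath_last_mem h1
  have htailX : G.otail O h₀ ∉ X₀ := by
    intro hmem
    exact hdisj _ (hc ▸ hcL1 : G.otail O h₀ ∈ a :: s.map (G.ohead O)) _ hmem rfl
  have hcross : G.crossing X₀ h₀ :=
    crossing_of_joins (joins_symm (joins_head_tail O h₀)) (List.mem_cons_self) htailX
  obtain ⟨C₂, Y, hcut, hh₀C₂, hcrX, hC₂Y, hend⟩ := bond X₀ h₀ hcross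
  refine ⟨C₂, hcut, ?_⟩
  ext f
  simp only [Set.mem_inter_iff, Set.mem_singleton_iff]
  constructor
  · rintro ⟨hfC₂, hfD'⟩
    by_contra hne
    have hfl := hD'l f hfD'
    have hcr := hcrX f hfC₂
    obtain ⟨p, q, hj, hp, hq⟩ := crossing_elim hcr
    have hpt : (p = G.otail O f ∧ q = G.ohead O f) ∨ (p = G.ohead O f ∧ q = G.otail O f) := by
      rcases joins_eq hj (joins_head_tail O f) with ⟨hh1, hh2⟩ | ⟨hh1, hh2⟩
      · exact Or.inl ⟨hh1, hh2⟩
      · exact Or.inr ⟨hh1, hh2⟩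
    rcases List.mem_append.mp hfl with hfs | hft
    · -- f ∈ s : both endpoints in the first list, but p ∈ X₀
      have hmem1 : G.otail O f ∈ a :: s.map (G.ohead O) := dpath_tail_mem h1 hfs
      have hmem2 : G.ohead O f ∈ a :: s.map (G.ohead O) :=
        List.mem_cons_of_mem _ (List.mem_map_of_mem hfs)
      rcases hpt with ⟨hh1, -⟩ | ⟨hh1, -⟩
      · exact hdisj _ (hh1 ▸ hmem1 : p ∈ a :: s.map (G.ohead O)) _ hp rfl
      · exact hdisj _ (hh1 ▸ hmem2 : p ∈ a :: s.map (G.ohead O)) _ hp rfl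
    · rcases List.mem_cons.mp hft with rfl | hft'
      · exact hne rfl
      · -- f ∈ t : both endpoints in X₀, but q ∉ X₀
        have hmem1 : G.otail O f ∈ G.ohead O h₀ :: t.map (G.ohead O) := dpath_tail_mem h2' hft'
        have hmem2 : G.ohead O f ∈ G.ohead O h₀ :: t.map (G.ohead O) :=
          List.mem_cons_of_mem _ (List.mem_map_of_mem hft')
        rcases hpt with ⟨-, hh2⟩ | ⟨-, hh2⟩
        · exact hq (hh2 ▸ hmem2)
        · exact hq (hh2 ▸ hmem1)
  · rintro rfl
    exact ⟨hh₀C₂, hh₀⟩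

end Cycle2
section Cycle3
variable {V E : Type} [Fintype V] [Fintype E] {G : OrGraph V E} {O : E → Bool}

lemma dirCycle_closed {v u : V} {l : List E} {e : E} (hdp : G.dpath O v l u)
    (hnd : (v :: l.map (G.ohead O)).Nodup)
    (hte : G.otail O e = u) (hhe : G.ohead O e = v) :
    G.IsDirCycle O {f | f = e ∨ f ∈ l} := by
  constructor
  · refine ⟨⟨e, Or.inl rfl⟩, cycle_cut_meet hdp hnd hte hhe, ?_⟩
    intro D' hss hne hforall
    obtain ⟨g, hgD, hgD'⟩ := Set.exists_of_ssubset hss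
    obtain ⟨h₀, hh₀⟩ := hne
    rcases hgD with rfl | hgl
    · -- the omitted edge is the closing edge `e` itself (here g = e)
      have hD'l : ∀ f ∈ D', f ∈ l := by
        intro f hf
        rcases hss.1 hf with rfl | hfl
        · exact absurd hf hgD'
        · exact hfl
      obtain ⟨Cu, hCu, hCuD'⟩ := cut_exists hdp hnd D' hD'l hh₀
      exact hforall Cu hCu (by rw [hCuD']; exact Set.ncard_singleton _)
    · -- the omitted edge g lies on the path: rotate the cycle
      obtain ⟨s, t, rfl⟩ := List.append_of_mem hgl
      obtain ⟨c, h1, h2⟩ := dpath_append.mp hdp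
      rw [dpath_cons] at h2
      obtain ⟨hc, h2'⟩ := h2
      have hdp2 : G.dpath O (G.ohead O g) (t ++ e :: s) c := by
        refine dpath_append.mpr ⟨u, h2', ?_⟩
        rw [dpath_cons]
        exact ⟨hte, by rw [hhe]; exact h1⟩
      have hnd2 : (G.ohead O g :: (t ++ e :: s).map (G.ohead O)).Nodup := by
        have hold : ((v :: s.map (G.ohead O)) ++ (G.ohead O g :: t.map (G.ohead O))).Nodup := by
          rw [List.cons_append]
          simpa [List.map_append] using hnd
        have hperm := (List.perm_append_comm
          (l₁ := v :: s.map (G.ohead O)) (l₂ := G.ohead O g :: t.map (G.ohead O)))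
        have hnew : ((G.ohead O g :: t.map (G.ohead O)) ++ (v :: s.map (G.ohead O))).Nodup :=
          hperm.nodup hold
        rw [List.cons_append] at hnew
        simpa [List.map_append, hhe] using hnew
      have hD'l : ∀ f ∈ D', f ∈ t ++ e :: s := by
        intro f hf
        rcases hss.1 hf with rfl | hfl
        · exact List.mem_append_right _ (List.mem_cons_self)
        · rcases List.mem_append.mp hfl with hfs | hft
          · exact List.mem_append_right _ (List.mem_cons_of_mem _ hfs)
          · rcases List.mem_cons.mp hft with rfl | hft'
            · exact absurd hf hgD'
            · exact List.mem_append_left _ hft'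
      obtain ⟨Cu, hCu, hCuD'⟩ := cut_exists hdp2 hnd2 D' hD'l hh₀
      exact hforall Cu hCu (by rw [hCuD']; exact Set.ncard_singleton _)
  · exact cycle_counts hdp hnd hte hhe

end Cycle3
section Main
variable {V E : Type} [Fintype V] [Fintype E] {G : OrGraph V E} {O : E → Bool}

lemma dreach_dpath {a b : V}
    (h : Relation.ReflTransGen (fun x y => ∃ f, G.otail O f = x ∧ G.ohead O f = y) a b) :
    ∃ l, G.dpath O a l b := by
  induction h with
  | refl => exact ⟨[], rfl⟩
  | tail h1 h2 ih =>
    obtain ⟨l, hl⟩ := ih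
    obtain ⟨f, hf1, hf2⟩ := h2
    exact ⟨l ++ [f], dpath_append.mpr ⟨_, hl, by rw [dpath_cons]; exact ⟨hf1, hf2⟩⟩⟩

lemma ncard_filter (p : E → Prop) : {f | p f}.ncard = (Finset.univ.filter p).card := by
  rw [Set.ncard_eq_toFinset_card', Set.toFinset_setOf]

lemma dirCut_dirCycle_false {C D : Set E} {e : E} (hC : G.IsDirCut O C) (heC : e ∈ C)
    (hD : G.IsDirCycle O D) (heD : e ∈ D) : False := by
  obtain ⟨hcut, U, hCU, htail⟩ := hC
  obtain ⟨hcyc, hcount⟩ := hD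
  set A : Finset E := Finset.univ.filter (fun f => f ∈ D ∧ G.ohead O f ∈ U) with hA
  set B : Finset E := Finset.univ.filter (fun f => f ∈ D ∧ G.otail O f ∈ U) with hB
  have hAB : A ⊆ B := by
    intro f hf
    simp only [hA, hB, Finset.mem_filter, Finset.mem_univ, true_and] at hf ⊢
    obtain ⟨hfD, hfU⟩ := hf
    refine ⟨hfD, ?_⟩
    by_contra htf
    have hcr : G.crossing U f := crossing_of_joins (joins_symm (joins_head_tail O f)) hfU htf
    exact htf (htail f ((hCU f).mpr hcr))
  have hcard : A.card = B.card := by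
    rw [Finset.card_eq_sum_card_fiberwise (f := G.ohead O)
        (t := Finset.univ.filter (· ∈ U)) (by
          intro x hx
          simp only [hA, Finset.mem_coe, Finset.mem_filter, Finset.mem_univ, true_and] at hx ⊢
          exact hx.2),
      Finset.card_eq_sum_card_fiberwise (f := G.otail O)
        (t := Finset.univ.filter (· ∈ U)) (by
          intro x hx
          simp only [hB, Finset.mem_coe, Finset.mem_filter, Finset.mem_univ, true_and] at hx ⊢
          exact hx.2)]
    apply Finset.sum_congr rfl
    intro x hx
    have hxU : x ∈ U := by simpa using hx
    have h1 : (A.filter (fun f => G.ohead O f = x)) =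
        Finset.univ.filter (fun f => f ∈ D ∧ G.ohead O f = x) := by
      ext f
      simp only [hA, Finset.mem_filter, Finset.mem_univ, true_and]
      constructor
      · rintro ⟨⟨h1, h2⟩, h3⟩; exact ⟨h1, h3⟩
      · rintro ⟨h1, h3⟩; exact ⟨⟨h1, h3 ▸ hxU⟩, h3⟩
    have h2 : (B.filter (fun f => G.otail O f = x)) =
        Finset.univ.filter (fun f => f ∈ D ∧ G.otail O f = x) := by
      ext f
      simp only [hB, Finset.mem_filter, Finset.mem_univ, true_and]
      constructor
      · rintro ⟨⟨h1, h2⟩, h3⟩; exact ⟨h1, h3⟩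
      · rintro ⟨h1, h3⟩; exact ⟨⟨h1, h3 ▸ hxU⟩, h3⟩
    rw [h1, h2]
    have hcx := hcount x
    rw [ncard_filter, ncard_filter] at hcx
    convert hcx using 2 <;> (ext g; simp)
  have hABeq : A = B := Finset.eq_of_subset_of_card_le hAB (le_of_eq hcard.symm)
  have heB : e ∈ B := by
    simp only [hB, Finset.mem_filter, Finset.mem_univ, true_and]
    exact ⟨heD, htail e heC⟩
  have heA : e ∈ A := hABeq ▸ heB
  have hhU : G.ohead O e ∈ U := by
    simp only [hA, Finset.mem_filter, Finset.mem_univ, true_and] at heA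
    exact heA.2
  have htU : G.otail O e ∈ U := htail e heC
  obtain ⟨p, q, hj, hp, hq⟩ := crossing_elim ((hCU e).mp heC)
  rcases joins_eq hj (joins_head_tail O e) with ⟨hh1, hh2⟩ | ⟨hh1, hh2⟩
  · exact hq (hh2 ▸ hhU)
  · exact hq (hh2 ▸ htU)

end Main

theorem mem_dirCut_iff_not_mem_dirCycle' {V E : Type} [Fintype V] [Fintype E]
    (G : OrGraph V E) (O : E → Bool) (e : E) :
    (∃ C : Set E, G.IsDirCut O C ∧ e ∈ C) ↔ ¬ (∃ C : Set E, G.IsDirCycle O C ∧ e ∈ C) := by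
  constructor
  · rintro ⟨C, hC, heC⟩ ⟨D, hD, heD⟩
    exact dirCut_dirCycle_false hC heC hD heD
  · intro hno
    by_cases hu : Relation.ReflTransGen
        (fun x y => ∃ f, G.otail O f = x ∧ G.ohead O f = y) (G.ohead O e) (G.otail O e)
    · exfalso
      obtain ⟨l, hl⟩ := dreach_dpath hu
      obtain ⟨l', hl', hnd', -⟩ := dpath_extract l.length _ l le_rfl hl
      exact hno ⟨_, dirCycle_closed hl' hnd' rfl rfl, Or.inl rfl⟩
    · set U : Set V := {x | Relation.ReflTransGen
        (fun x y => ∃ f, G.otail O f = x ∧ G.ohead O f = y) (G.ohead O e) x} with hU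
      have hv : G.ohead O e ∈ U := Relation.ReflTransGen.refl
      have hcr : G.crossing U e :=
        crossing_of_joins (joins_symm (joins_head_tail O e)) hv hu
      obtain ⟨C₂, Y, hcut, heC₂, hcrX, hC₂Y, hend⟩ := bond U e hcr
      refine ⟨C₂, ⟨hcut, Y, hC₂Y, ?_⟩, heC₂⟩
      intro f hf
      have hcrU := hcrX f hf
      have htf : G.otail O f ∉ U := by
        intro htf
        have hhf : G.ohead O f ∈ U := Relation.ReflTransGen.tail htf ⟨f, rfl, rfl⟩
        obtain ⟨p, q, hj, hp, hq⟩ := crossing_elim hcrU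
        rcases joins_eq hj (joins_head_tail O f) with ⟨h1, h2⟩ | ⟨h1, h2⟩
        · exact hq (h2 ▸ hhf)
        · exact hq (h2 ▸ htf)
      obtain ⟨p, q, hj, hpY, hqY, hpU, hqU⟩ := hend f hf
      rcases joins_eq hj (joins_head_tail O f) with ⟨h1, h2⟩ | ⟨h1, h2⟩
      · exact h1 ▸ hpY
      · exact absurd (h2 ▸ hqU) htf

/-- an edge belongs to a directed cut of an orientation `O` iff it
does not belong to a directed cycle of `O`; in particular these edge sets
partition `E(G)`. -/
theorem mem_dirCut_iff_not_mem_dirCycle {V E : Type} [Fintype V] [Fintype E]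
    (G : OrGraph V E) (O : E → Bool) (e : E) :
    (∃ C : Set E, G.IsDirCut O C ∧ e ∈ C) ↔ ¬ (∃ C : Set E, G.IsDirCycle O C ∧ e ∈ C) := by
  exact mem_dirCut_iff_not_mem_dirCycle' G O e
end

section
/- Let G be a graph with a total order on its edge set, and let S, T be spanning subgraphs (edge subsets) of G such that S minus (Î(S) ∪ L̂(S)) ⊆ T ⊆ S ∪ Î(S) ∪ L̂(S). Then Î(S) = Î(T) and L̂(S) = L̂(T). -/
open scoped Classical

/-- A multigraph with a fixed reference orientation: each edge `e` has a
source `src e` and a target `tgt e` (the positive direction `e⁺ = (src e, tgt e)`). -/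
structure MGraph (V E : Type) where
  src : E → V
  tgt : E → V

namespace MGraph

variable {V E : Type} (G : MGraph V E)

/-- Two vertices are joined by some edge of `S`. -/
def step (S : Set E) (a b : V) : Prop :=
  ∃ e ∈ S, (G.src e = a ∧ G.tgt e = b) ∨ (G.src e = b ∧ G.tgt e = a)

/-- `κ(S)`: the number of connected components of the spanning subgraph `(V, S)`. -/
noncomputable def kappa (S : Set E) : ℕ :=
  Nat.card (Quot (G.step S))

/-- A cut of `G`: a minimal nonempty edge set whose removal increases the
number of connected components. -/
def IsCut (C : Set E) : Prop :=
  C.Nonempty ∧ G.kappa Cᶜ > G.kappa Set.univ ∧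
    ∀ C' : Set E, C' ⊂ C → C'.Nonempty → ¬ (G.kappa C'ᶜ > G.kappa Set.univ)

/-- A cycle of `G`: a minimal nonempty edge set meeting no cut of `G` in
precisely one element. -/
def IsCycle (C : Set E) : Prop :=
  C.Nonempty ∧ (∀ Cu : Set E, G.IsCut Cu → (Cu ∩ C).ncard ≠ 1) ∧
    ∀ C' : Set E, C' ⊂ C → C'.Nonempty →
      ¬ (∀ Cu : Set E, G.IsCut Cu → (Cu ∩ C').ncard ≠ 1)

/-- Head of edge `e` under orientation `O` (`O e = true` means the reference
direction `src e → tgt e`). -/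
def ohead (O : E → Bool) (e : E) : V := if O e then G.tgt e else G.src e

/-- Tail of edge `e` under orientation `O`. -/
def otail (O : E → Bool) (e : E) : V := if O e then G.src e else G.tgt e

/-- Edge `e` crosses the vertex set `U` (exactly one endpoint in `U`). -/
def crossing (U : Set V) (e : E) : Prop := G.src e ∈ U ↔ G.tgt e ∉ U

/-- A directed cut of the orientation `O`: a cut all of whose edges are
oriented consistently out of some vertex set `U`. -/
def IsDirCut (O : E → Bool) (C : Set E) : Prop :=
  G.IsCut C ∧ ∃ U : Set V, (∀ e, e ∈ C ↔ G.crossing U e) ∧ ∀ e ∈ C, G.otail O e ∈ U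

/-- A directed cycle of the orientation `O`: a cycle oriented consistently,
i.e. in-degree equals out-degree at each vertex within the cycle. -/
def IsDirCycle (O : E → Bool) (C : Set E) : Prop :=
  G.IsCycle C ∧ ∀ v : V,
    {e ∈ C | G.ohead O e = v}.ncard = {e ∈ C | G.otail O e = v}.ncard

section Activities

variable [LinearOrder E]

/-- `Î(S)`: cut active edges of the spanning subgraph `S`. -/
def Iact (S : Set E) : Set E :=
  {e | ∃ C : Set E, G.IsCut C ∧ e ∈ C ∧ (∀ f ∈ C, f ≠ e → f ∉ S) ∧ ∀ f ∈ C, e ≤ f}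

/-- `L̂(S)`: cycle active edges of the spanning subgraph `S`. -/
def Lact (S : Set E) : Set E :=
  {e | ∃ C : Set E, G.IsCycle C ∧ e ∈ C ∧ (∀ f ∈ C, f = e ∨ f ∈ S) ∧ ∀ f ∈ C, e ≤ f}

/-- `I(O)`: cut active edges of the orientation `O`. -/
def Ior (O : E → Bool) : Set E :=
  {e | ∃ C : Set E, G.IsDirCut O C ∧ e ∈ C ∧ ∀ f ∈ C, e ≤ f}

/-- `L(O)`: cycle active edges of the orientation `O`. -/
def Lor (O : E → Bool) : Set E :=
  {e | ∃ C : Set E, G.IsDirCycle O C ∧ e ∈ C ∧ ∀ f ∈ C, e ≤ f}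

end Activities

/-- The Tutte polynomial via the corank-nullity expansion, evaluated in a
commutative ring. -/
noncomputable def tutte [Fintype V] [Fintype E] (R : Type) [CommRing R] (x y : R) : R :=
  ∑ S : Finset E, (x - 1) ^ (G.kappa ↑S - G.kappa Set.univ) *
    (y - 1) ^ (S.card + G.kappa ↑S - Fintype.card V)

/-! ### Fourientations.
A fourientation is `F : E → Bool × Bool`, recording whether `e⁺` resp. `e⁻`
belongs to the fourientation. -/

/-- A potential cut of the fourientation `F`: a directed cut each of whose
edges is unoriented in `F` or oriented in the cut direction (out of `U`). -/
def PotCut (F : E → Bool × Bool) (C : Set E) : Prop :=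
  G.IsCut C ∧ ∃ U : Set V, (∀ e, e ∈ C ↔ G.crossing U e) ∧
    ∀ e ∈ C, (G.src e ∈ U → (F e).2 = false) ∧ (G.src e ∉ U → (F e).1 = false)

/-- A potential cycle of the fourientation `F`, with cyclic direction `dir`:
a consistently directed cycle each of whose edges has its `dir`-direction
present in `F` (so each edge is bioriented or oriented in the cycle direction). -/
def PotCycle (F : E → Bool × Bool) (C : Set E) (dir : E → Bool) : Prop :=
  G.IsCycle C ∧
    (∀ v : V, {e ∈ C | G.ohead dir e = v}.ncard = {e ∈ C | G.otail dir e = v}.ncard) ∧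
    ∀ e ∈ C, (if dir e then (F e).1 else (F e).2) = true

/-- Add the direction `d` of edge `e` to the fourientation `F`. -/
def addDir [DecidableEq E] (F : E → Bool × Bool) (e : E) (d : Bool) : E → Bool × Bool :=
  Function.update F e (if d then (true, (F e).2) else ((F e).1, true))

/-- Remove the direction `d` of edge `e` from the fourientation `F`. -/
def remDir [DecidableEq E] (F : E → Bool × Bool) (e : E) (d : Bool) : E → Bool × Bool :=
  Function.update F e (if d then (false, (F e).2) else ((F e).1, false))

/-- `ᵉO`: toggle the status of the edge `e` in the fourientation `F`. -/
def toggle [DecidableEq E] (F : E → Bool × Bool) (e : E) : E → Bool × Bool :=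
  Function.update F e ((F e).2, (F e).1)

section FourActivities

variable [LinearOrder E]

/-- `I^o(O)`: oriented edges that are minimal in some potential cut. -/
def Io (F : E → Bool × Bool) : Set E :=
  {f | (F f).1 ≠ (F f).2 ∧ ∃ C : Set E, G.PotCut F C ∧ f ∈ C ∧ ∀ g ∈ C, f ≤ g}

/-- `L^o(O)`: oriented edges that are minimal in some potential cycle. -/
def Lo (F : E → Bool × Bool) : Set E :=
  {f | (F f).1 ≠ (F f).2 ∧
    ∃ (C : Set E) (dir : E → Bool), G.PotCycle F C dir ∧ f ∈ C ∧ ∀ g ∈ C, f ≤ g}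

/-- `I^u(O)`: unoriented edges `f` minimal in some potential cut of
`O ∪ {f^{σᵤ(f)}}`. -/
def Iu (σu : E → Bool) (F : E → Bool × Bool) : Set E :=
  {f | F f = (false, false) ∧
    ∃ C : Set E, G.PotCut (addDir F f (σu f)) C ∧ f ∈ C ∧ ∀ g ∈ C, f ≤ g}

/-- `L^b(O)`: bioriented edges `f` minimal in some potential cycle of
`O \ {f^{σ_b(f)}}`. -/
def Lb (σb : E → Bool) (F : E → Bool × Bool) : Set E :=
  {f | F f = (true, true) ∧
    ∃ (C : Set E) (dir : E → Bool),
      G.PotCycle (remDir F f (σb f)) C dir ∧ f ∈ C ∧ ∀ g ∈ C, f ≤ g}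

end FourActivities

/-- The deletion `G − e`. -/
def del (e : E) : MGraph V {f : E // f ≠ e} :=
  ⟨fun f => G.src f.1, fun f => G.tgt f.1⟩

/-- The contraction `G/e`: identify the endpoints of `e` and remove `e`. -/
def contr (e : E) : MGraph (Quot (fun a b => a = G.src e ∧ b = G.tgt e)) {f : E // f ≠ e} :=
  ⟨fun f => Quot.mk _ (G.src f.1), fun f => Quot.mk _ (G.tgt f.1)⟩

/-! ### Potential walks in a fourientation. A walk step is a pair `(e, d)` of an
edge and a chosen direction (`d = true` for the reference direction). -/

/-- Tail of the directed edge `(e, d)`. -/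
def ftail (p : E × Bool) : V := if p.2 then G.src p.1 else G.tgt p.1

/-- Head of the directed edge `(e, d)`. -/
def fhead (p : E × Bool) : V := if p.2 then G.tgt p.1 else G.src p.1

/-- The direction `d` of `e` is present in the fourientation `F`. -/
def present (F : E → Bool × Bool) (p : E × Bool) : Prop :=
  (if p.2 then (F p.1).1 else (F p.1).2) = true

/-- A potential walk of the fourientation `F` from `a` to `b`: each step uses
a direction present in `F` (so each edge is bioriented or oriented
consistently with the walk). -/
def IsPWalk (F : E → Bool × Bool) : V → List (E × Bool) → V → Prop
  | a, [], b => a = b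
  | a, p :: rest, b => G.ftail p = a ∧ present F p ∧ IsPWalk F (G.fhead p) rest b

/-- A potential path: a potential walk visiting pairwise distinct vertices. -/
def IsPPath (F : E → Bool × Bool) (a : V) (w : List (E × Bool)) (b : V) : Prop :=
  G.IsPWalk F a w b ∧ (a :: w.map G.fhead).Nodup

end MGraph

set_option linter.unusedSectionVars false

namespace GT

open MGraph

variable {V E : Type} (G : MGraph V E)

/-- Crossing edge set of a vertex set. -/
def cross (U : Set V) : Set E := {e | G.crossing U e}

variable {G}

lemma mem_cross {U : Set V} {e : E} :
    e ∈ cross G U ↔ (G.src e ∈ U ↔ G.tgt e ∉ U) := Iff.rfl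

lemma cross_symmDiff (U W : Set V) :
    cross G (symmDiff U W) = symmDiff (cross G U) (cross G W) := by
  ext e
  simp only [mem_cross, Set.mem_symmDiff, MGraph.crossing]
  by_cases h1 : G.src e ∈ U <;> by_cases h2 : G.tgt e ∈ U <;>
    by_cases h3 : G.src e ∈ W <;> by_cases h4 : G.tgt e ∈ W <;>
    simp_all [Set.mem_symmDiff, mem_cross]

lemma cross_empty : cross G (∅ : Set V) = ∅ := by
  ext e; simp [mem_cross]

lemma loop_not_mem_cross {e : E} (h : G.src e = G.tgt e) (U : Set V) :
    e ∉ cross G U := by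
  simp only [mem_cross, h]
  tauto

lemma step_mono {S S' : Set E} (h : S ⊆ S') {a b : V} (hab : G.step S a b) :
    G.step S' a b := by
  obtain ⟨e, he, h2⟩ := hab
  exact ⟨e, h he, h2⟩

lemma eqvGen_invariant {S : Set E} {U : Set V} (hc : ∀ e ∈ S, e ∉ cross G U)
    {a b : V} (h : Relation.EqvGen (G.step S) a b) : a ∈ U ↔ b ∈ U := by
  induction h with
  | rel a b hab =>
      obtain ⟨e, he, h2⟩ := hab
      have hx := hc e he
      simp only [mem_cross] at hx
      rcases h2 with ⟨h3, h4⟩ | ⟨h3, h4⟩ <;> subst h3 <;> subst h4 <;> tauto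
  | refl a => rfl
  | symm a b _ ih => exact ih.symm
  | trans a b c _ _ ih1 ih2 => exact ih1.trans ih2

variable [Fintype V] [Fintype E]

instance (S : Set E) : Finite (Quot (G.step S)) :=
  Finite.of_surjective (Quot.mk _) Quot.mk_surjective

/-- Key characterization: removing `R` increases the component count iff some
nonempty crossing set is contained in `R`. -/
lemma kappa_gt_iff (R : Set E) :
    G.kappa Rᶜ > G.kappa Set.univ ↔ ∃ U : Set V, (cross G U).Nonempty ∧ cross G U ⊆ R := by
  have hmono : ∀ a b, G.step Rᶜ a b → Quot.mk (G.step Set.univ) a = Quot.mk (G.step Set.univ) b :=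
    fun a b hab => Quot.sound (step_mono (Set.subset_univ _) hab)
  set π : Quot (G.step Rᶜ) → Quot (G.step Set.univ) := Quot.lift (Quot.mk _) hmono with hπ
  have hsurj : Function.Surjective π := by
    intro q
    obtain ⟨a, rfl⟩ := Quot.exists_rep q
    exact ⟨Quot.mk _ a, rfl⟩
  constructor
  · intro hgt
    have hninj : ¬ Function.Injective π := by
      intro hinj
      exact absurd (Nat.card_le_card_of_injective π hinj) (by simpa [MGraph.kappa] using hgt)
    rw [Function.not_injective_iff] at hninj
    obtain ⟨x, y, hxy, hne⟩ := hninj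
    obtain ⟨a, rfl⟩ := Quot.exists_rep x
    obtain ⟨b, rfl⟩ := Quot.exists_rep y
    set U : Set V := {w | Relation.EqvGen (G.step Rᶜ) a w} with hU
    have hsub : cross G U ⊆ R := by
      intro e he
      by_contra heR
      have hstep : G.step Rᶜ (G.src e) (G.tgt e) := ⟨e, heR, Or.inl ⟨rfl, rfl⟩⟩
      simp only [mem_cross] at he
      have hsrc_tgt : G.src e ∈ U ↔ G.tgt e ∈ U := by
        constructor
        · intro h
          exact Relation.EqvGen.trans _ _ _ h (Relation.EqvGen.rel _ _ hstep)
        · intro h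
          exact Relation.EqvGen.trans _ _ _ h
            (Relation.EqvGen.symm _ _ (Relation.EqvGen.rel _ _ hstep))
      tauto
    refine ⟨U, ?_, hsub⟩
    by_contra hempty
    rw [Set.not_nonempty_iff_eq_empty] at hempty
    have hEG : Relation.EqvGen (G.step Set.univ) a b := Quot.eq.mp hxy
    have hinv : a ∈ U ↔ b ∈ U :=
      eqvGen_invariant (by rw [hempty]; simp) hEG
    have haU : a ∈ U := Relation.EqvGen.refl a
    exact hne (Quot.eq.mpr (hinv.mp haU))
  · rintro ⟨U, ⟨e, he⟩, hsub⟩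
    have hcRc : ∀ f ∈ Rᶜ, f ∉ cross G U := fun f hf hfc => hf (hsub hfc)
    have hne : Quot.mk (G.step Rᶜ) (G.src e) ≠ Quot.mk (G.step Rᶜ) (G.tgt e) := by
      intro h
      have := eqvGen_invariant hcRc (Quot.eq.mp h)
      simp only [mem_cross] at he
      tauto
    have heq : π (Quot.mk _ (G.src e)) = π (Quot.mk _ (G.tgt e)) :=
      Quot.sound ⟨e, Set.mem_univ e, Or.inl ⟨rfl, rfl⟩⟩
    have hle : Nat.card (Quot (G.step Set.univ)) ≤ Nat.card (Quot (G.step Rᶜ)) :=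
      Nat.card_le_card_of_surjective π hsurj
    have hlt : G.kappa Set.univ ≠ G.kappa Rᶜ := by
      intro hcard
      have hbij : Function.Bijective π :=
        (Nat.bijective_iff_surjective_and_card π).mpr ⟨hsurj, hcard.symm⟩
      exact hne (hbij.injective heq)
    simp only [MGraph.kappa] at hlt ⊢
    omega

lemma isCut_iff {C : Set E} :
    G.IsCut C ↔ C.Nonempty ∧ (∃ U : Set V, C = cross G U) ∧
      ∀ W : Set V, (cross G W).Nonempty → cross G W ⊆ C → cross G W = C := by
  constructor
  · rintro ⟨hne, hgt, hmin⟩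
    obtain ⟨U, hUne, hUsub⟩ := (kappa_gt_iff C).mp hgt
    have hCU : cross G U = C := by
      by_contra hne'
      exact hmin _ (ssubset_of_subset_of_ne hUsub hne') hUne
        ((kappa_gt_iff _).mpr ⟨U, hUne, subset_rfl⟩)
    refine ⟨hne, ⟨U, hCU.symm⟩, ?_⟩
    intro W hWne hWsub
    by_contra hne'
    exact hmin _ (ssubset_of_subset_of_ne hWsub hne') hWne
      ((kappa_gt_iff _).mpr ⟨W, hWne, subset_rfl⟩)
  · rintro ⟨hne, ⟨U, rfl⟩, hmin⟩
    refine ⟨hne, (kappa_gt_iff _).mpr ⟨U, hne, subset_rfl⟩, ?_⟩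
    intro C' hC' hC'ne hgt'
    obtain ⟨W, hWne, hWsub⟩ := (kappa_gt_iff C').mp hgt'
    have := hmin W hWne (hWsub.trans hC'.subset)
    rw [this] at hWsub
    exact hC'.not_subset hWsub

/-- Every edge of a crossing set lies in a cut inside that crossing set. -/
lemma exists_cut_through {X : Set V} {e : E} (he : e ∈ cross G X) :
    ∃ C : Set E, G.IsCut C ∧ e ∈ C ∧ C ⊆ cross G X := by
  have hex : ∃ n, ∃ Y : Set V, e ∈ cross G Y ∧ cross G Y ⊆ cross G X ∧ (cross G Y).ncard = n :=
    ⟨_, X, he, subset_rfl, rfl⟩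
  obtain ⟨Y, heY, hYsub, hYcard⟩ := Nat.find_spec hex
  refine ⟨cross G Y, ?_, heY, hYsub⟩
  rw [isCut_iff]
  refine ⟨⟨e, heY⟩, ⟨Y, rfl⟩, ?_⟩
  intro W hWne hWsub
  by_contra hne'
  have hss : cross G W ⊂ cross G Y := ssubset_of_subset_of_ne hWsub hne'
  by_cases heW : e ∈ cross G W
  · have : (cross G W).ncard < Nat.find hex := by
      rw [← hYcard]
      exact Set.ncard_lt_ncard hss (Set.toFinite _)
    exact Nat.find_min hex this ⟨W, heW, hWsub.trans hYsub, rfl⟩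
  · have hkey : cross G (symmDiff Y W) = cross G Y \ cross G W := by
      rw [cross_symmDiff]
      rw [Set.symmDiff_def]
      rw [Set.diff_eq_empty.mpr hWsub]
      simp
    have hmem : e ∈ cross G (symmDiff Y W) := by
      rw [hkey]; exact ⟨heY, heW⟩
    have hss2 : cross G (symmDiff Y W) ⊂ cross G Y := by
      rw [hkey]
      refine (Set.diff_subset).ssubset_of_ne ?_
      intro hEq
      obtain ⟨f, hf⟩ := hWne
      have hfY : f ∈ cross G Y := hWsub hf
      rw [← hEq] at hfY
      exact hfY.2 hf
    have : (cross G (symmDiff Y W)).ncard < Nat.find hex := by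
      rw [← hYcard]
      exact Set.ncard_lt_ncard hss2 (Set.toFinite _)
    exact Nat.find_min hex this ⟨_, hmem, hss2.subset.trans hYsub, rfl⟩

/-- Cocircuit elimination. -/
lemma cut_elimination {C1 C2 : Set E} (h1 : G.IsCut C1) (h2 : G.IsCut C2)
    {e f : E} (he1 : e ∈ C1) (he2 : e ∉ C2) (hf1 : f ∈ C1) (hf2 : f ∈ C2) :
    ∃ C : Set E, G.IsCut C ∧ e ∈ C ∧ C ⊆ (C1 ∪ C2) \ {f} := by
  obtain ⟨-, ⟨U1, rfl⟩, -⟩ := isCut_iff.mp h1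
  obtain ⟨-, ⟨U2, rfl⟩, -⟩ := isCut_iff.mp h2
  have hmem : e ∈ cross G (symmDiff U1 U2) := by
    rw [cross_symmDiff, Set.mem_symmDiff]
    exact Or.inl ⟨he1, he2⟩
  obtain ⟨C, hC, heC, hCsub⟩ := exists_cut_through hmem
  refine ⟨C, hC, heC, hCsub.trans ?_⟩
  rw [cross_symmDiff]
  intro g hg
  rw [Set.mem_symmDiff] at hg
  constructor
  · rcases hg with ⟨hg, -⟩ | ⟨hg, -⟩
    · exact Or.inl hg
    · exact Or.inr hg
  · rintro rfl
    rcases hg with ⟨-, hg⟩ | ⟨-, hg⟩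
    · exact hg hf2
    · exact hg hf1

/-- Orthogonality: a cut and a cycle never meet in exactly one edge, so a
common edge has a companion. -/
lemma cut_cycle_companion {C Cy : Set E} (hC : G.IsCut C) (hCy : G.IsCycle Cy)
    {f : E} (hfC : f ∈ C) (hfCy : f ∈ Cy) : ∃ g, g ∈ C ∧ g ∈ Cy ∧ g ≠ f := by
  have hne := hCy.2.1 C hC
  by_contra hno
  push_neg at hno
  apply hne
  have : C ∩ Cy = {f} := by
    apply Set.eq_singleton_iff_unique_mem.mpr
    exact ⟨⟨hfC, hfCy⟩, fun g hg => by
      by_contra hgf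
      exact hgf (hno g hg.1 hg.2)⟩
  rw [this, Set.ncard_singleton]
/-- An even edge set: the crossing degree at each vertex is even. -/
def EvenSet (G : MGraph V E) [Fintype V] [Fintype E] (B : Set E) : Prop :=
  ∀ v : V, Even ((cross G {v} ∩ B).ncard)

lemma even_symmDiff_ncard {X Y : Set E} (hX : Even X.ncard) (hY : Even Y.ncard) :
    Even ((symmDiff X Y).ncard) := by
  have h1 : (symmDiff X Y).ncard = (X \ Y).ncard + (Y \ X).ncard := by
    rw [Set.symmDiff_def]
    exact Set.ncard_union_eq disjoint_sdiff_sdiff (Set.toFinite _) (Set.toFinite _)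
  have h2 : (X ∩ Y).ncard + (X \ Y).ncard = X.ncard :=
    Set.ncard_inter_add_ncard_diff_eq_ncard X Y (Set.toFinite _)
  have h3 : (Y ∩ X).ncard + (Y \ X).ncard = Y.ncard :=
    Set.ncard_inter_add_ncard_diff_eq_ncard Y X (Set.toFinite _)
  have h4 : (X ∩ Y).ncard = (Y ∩ X).ncard := by rw [Set.inter_comm]
  rw [Nat.even_iff] at *
  omega

lemma symmDiff_inter (X Y B : Set E) :
    symmDiff X Y ∩ B = symmDiff (X ∩ B) (Y ∩ B) := by
  ext x
  simp only [Set.mem_symmDiff, Set.mem_inter_iff]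
  tauto

/-- Even sets meet every crossing set evenly. -/
lemma evenSet_cross {B : Set E} (hB : EvenSet G B) (U : Set V) :
    Even ((cross G U ∩ B).ncard) := by
  have key : ∀ F : Finset V, Even ((cross G (↑F : Set V) ∩ B).ncard) := by
    intro F
    induction F using Finset.induction_on with
    | empty => simp [cross_empty]
    | @insert v F hv ih =>
        have hins : (↑(insert v F) : Set V) = symmDiff {v} (↑F : Set V) := by
          rw [Set.symmDiff_def]
          ext w
          simp only [Finset.coe_insert, Set.mem_insert_iff, Set.mem_union, Set.mem_diff,
            Set.mem_singleton_iff, Finset.mem_coe]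
          constructor
          · rintro (rfl | hw)
            · left; exact ⟨rfl, fun h => hv (by exact_mod_cast h)⟩
            · by_cases hwv : w = v
              · subst hwv; exact absurd hw hv
              · right; exact ⟨hw, hwv⟩
          · rintro (⟨rfl, -⟩ | ⟨hw, -⟩)
            · left; rfl
            · right; exact hw
        rw [hins, cross_symmDiff, symmDiff_inter]
        exact even_symmDiff_ncard (by exact hB v) ih
  have : U = (↑U.toFinset : Set V) := by simp
  rw [this]
  exact key U.toFinset

lemma evenSet_cut_ncard {B : Set E} (hB : EvenSet G B) {C : Set E} (hC : G.IsCut C) :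
    (C ∩ B).ncard ≠ 1 := by
  obtain ⟨-, ⟨U, rfl⟩, -⟩ := isCut_iff.mp hC
  intro h
  have := evenSet_cross hB U
  rw [h] at this
  exact (Nat.not_even_iff.mpr rfl) this

lemma evenSet_symmDiff {A D : Set E} (hA : EvenSet G A) (hD : EvenSet G D) :
    EvenSet G (symmDiff A D) := by
  intro v
  rw [Set.inter_comm, symmDiff_inter, Set.inter_comm A, Set.inter_comm D]
  exact even_symmDiff_ncard (hA v) (hD v)
/-- Walks inside an edge set `S`. -/
def IsWk (G : MGraph V E) (S : Set E) : V → List (E × Bool) → V → Prop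
  | a, [], b => a = b
  | a, p :: l, b => p.1 ∈ S ∧ G.ftail p = a ∧ IsWk G S (G.fhead p) l b

lemma wk_append {G : MGraph V E} {S : Set E} :
    ∀ {l l' : List (E × Bool)} {a b c : V}, IsWk G S a l b → IsWk G S b l' c →
      IsWk G S a (l ++ l') c := by
  intro l
  induction l with
  | nil => intro l' a b c h1 h2; cases h1; exact h2
  | cons p l ih =>
      rintro l' a b c ⟨hp, hta, hw⟩ h2
      exact ⟨hp, hta, ih hw h2⟩

lemma wk_split_app {G : MGraph V E} {S : Set E} :
    ∀ {l1 l2 : List (E × Bool)} {a b : V}, IsWk G S a (l1 ++ l2) b →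
      ∃ c, IsWk G S a l1 c ∧ IsWk G S c l2 b := by
  intro l1
  induction l1 with
  | nil => intro l2 a b h; exact ⟨a, rfl, h⟩
  | cons p l ih =>
      rintro l2 a b ⟨hp, hta, hw⟩
      obtain ⟨c, h1, h2⟩ := ih hw
      exact ⟨c, ⟨hp, hta, h1⟩, h2⟩

lemma wk_mem_edge {G : MGraph V E} {S : Set E} :
    ∀ {l : List (E × Bool)} {a b : V} {q : E × Bool}, IsWk G S a l b → q ∈ l → q.1 ∈ S := by
  intro l
  induction l with
  | nil => intro a b q _ h; simp at h
  | cons p l ih =>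
      rintro a b q ⟨hp, hta, hw⟩ hq
      rcases List.mem_cons.mp hq with rfl | hq
      · exact hp
      · exact ih hw hq

lemma wk_vertexList_decomp {G : MGraph V E} {S : Set E} :
    ∀ {l : List (E × Bool)} {a b : V}, IsWk G S a l b →
      ∃ xs, a :: l.map G.fhead = xs ++ [b] := by
  intro l
  induction l with
  | nil => rintro a b rfl; exact ⟨[], rfl⟩
  | cons p l ih =>
      rintro a b ⟨hp, hta, hw⟩
      obtain ⟨xs, hxs⟩ := ih hw
      exact ⟨a :: xs, by simp only [List.map_cons, hxs, List.cons_append]⟩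

lemma wk_shift {G : MGraph V E} {S : Set E} :
    ∀ {l : List (E × Bool)} {p : E × Bool} {a b : V}, IsWk G S a (p :: l) b →
      G.fhead p :: l.map G.fhead = l.map G.ftail ++ [b] := by
  intro l
  induction l with
  | nil =>
      rintro p a b ⟨hp, hta, hw⟩
      have hb : G.fhead p = b := hw
      simp [hb]
  | cons q l ih =>
      rintro p a b ⟨hp, hta, hw⟩
      have h2 := ih hw
      obtain ⟨hq, htq, hw'⟩ := hw
      simp only [List.map_cons, List.cons_append]
      rw [← htq]
      exact congrArg _ h2

lemma wk_tail_mem {G : MGraph V E} {S : Set E} :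
    ∀ {l : List (E × Bool)} {a b : V} {q : E × Bool}, IsWk G S a l b → q ∈ l →
      G.ftail q = a ∨ G.ftail q ∈ l.map G.fhead := by
  intro l
  induction l with
  | nil => intro a b q _ h; simp at h
  | cons p l ih =>
      rintro a b q ⟨hp, hta, hw⟩ hq
      rcases List.mem_cons.mp hq with rfl | hq
      · exact Or.inl hta
      · rcases ih hw hq with h | h
        · right; rw [h]; exact List.mem_cons_self
        · right; exact List.mem_cons_of_mem _ h

lemma wk_tail_ne_last {G : MGraph V E} {S : Set E} :
    ∀ {l : List (E × Bool)} {a b : V} {q : E × Bool}, IsWk G S a l b →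
      (a :: l.map G.fhead).Nodup → q ∈ l → G.ftail q ≠ b := by
  intro l
  induction l with
  | nil => intro a b q _ _ h; simp at h
  | cons p l ih =>
      rintro a b q ⟨hp, hta, hw⟩ hnd hq
      rcases List.mem_cons.mp hq with rfl | hq
      · obtain ⟨xs, hxs⟩ := wk_vertexList_decomp hw
        have hbmem : b ∈ G.fhead q :: l.map G.fhead := by
          rw [hxs]; exact List.mem_append_right _ (List.mem_singleton_self _)
        have hnotmem : a ∉ G.fhead q :: l.map G.fhead := by
          rw [List.map_cons] at hnd
          exact (List.nodup_cons.mp hnd).1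
        rw [hta]
        intro hab
        rw [hab] at hnotmem
        exact hnotmem hbmem
      · exact ih hw ((List.nodup_cons.mp hnd).2) hq
lemma dart_endpoints {G : MGraph V E} (p : E × Bool) :
    (G.ftail p = G.src p.1 ∧ G.fhead p = G.tgt p.1) ∨
    (G.ftail p = G.tgt p.1 ∧ G.fhead p = G.src p.1) := by
  cases hb : p.2 <;> simp [MGraph.ftail, MGraph.fhead, hb]

lemma dart_same_edge {G : MGraph V E} {p q : E × Bool} (h : q.1 = p.1) :
    (G.ftail q = G.ftail p ∧ G.fhead q = G.fhead p) ∨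
    (G.ftail q = G.fhead p ∧ G.fhead q = G.ftail p) := by
  have hep := dart_endpoints (G := G) p
  have heq := dart_endpoints (G := G) q
  rw [h] at heq
  rcases hep with ⟨h1, h2⟩ | ⟨h1, h2⟩ <;> rcases heq with ⟨h3, h4⟩ | ⟨h3, h4⟩
  · exact Or.inl ⟨h3.trans h1.symm, h4.trans h2.symm⟩
  · exact Or.inr ⟨h3.trans h2.symm, h4.trans h1.symm⟩
  · exact Or.inr ⟨h3.trans h2.symm, h4.trans h1.symm⟩
  · exact Or.inl ⟨h3.trans h1.symm, h4.trans h2.symm⟩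

lemma wk_edges_nodup {G : MGraph V E} {S : Set E} :
    ∀ {l : List (E × Bool)} {a b : V}, IsWk G S a l b →
      (a :: l.map G.fhead).Nodup → (l.map Prod.fst).Nodup := by
  intro l
  induction l with
  | nil => intro a b _ _; simp
  | cons p l ih =>
      rintro a b ⟨hp, hta, hw⟩ hnd
      rw [List.map_cons] at hnd ⊢
      rw [List.nodup_cons] at hnd
      have hnd2 := hnd.2
      rw [List.nodup_cons]
      refine ⟨?_, ih hw hnd2⟩
      intro hmem
      obtain ⟨q, hql, hqe⟩ := List.mem_map.mp hmem
      have hamem : a ∉ G.fhead p :: l.map G.fhead := hnd.1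
      have hpmem : G.fhead p ∉ l.map G.fhead := (List.nodup_cons.mp hnd2).1
      have hqh : G.fhead q ∈ l.map G.fhead := List.mem_map_of_mem hql
      rcases dart_same_edge (G := G) hqe with ⟨h1, h2⟩ | ⟨h1, h2⟩
      · rw [h2] at hqh; exact hpmem hqh
      · rw [h2, hta] at hqh
        exact hamem (List.mem_cons_of_mem _ hqh)

lemma countP_or_of_disj {α : Type} (P Q : α → Prop) :
    ∀ (l : List α), (∀ x ∈ l, ¬(P x ∧ Q x)) →
      l.countP (fun x => decide (P x ∨ Q x)) =
        l.countP (fun x => decide (P x)) + l.countP (fun x => decide (Q x)) := by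
  intro l
  induction l with
  | nil => intro _; simp
  | cons x l ih =>
      intro h
      have hx := h x (List.mem_cons_self)
      have hl := ih (fun y hy => h y (List.mem_cons_of_mem _ hy))
      rw [List.countP_cons, List.countP_cons, List.countP_cons, hl]
      by_cases hP : P x <;> by_cases hQ : Q x
      · exact absurd ⟨hP, hQ⟩ hx
      all_goals simp [hP, hQ] <;> omega

/-- The edge set of a closed trail without loops is even. -/
lemma closed_trail_even {G : MGraph V E} {S : Set E} {L : List (E × Bool)} {w : V}
    (hW : IsWk G S w L w) (hLne : L ≠ [])
    (hnd : (L.map Prod.fst).Nodup)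
    (hnl : ∀ p ∈ L, G.src p.1 ≠ G.tgt p.1) :
    EvenSet G {e | e ∈ L.map Prod.fst} := by
  intro v
  -- the intersection as a list
  have hset : cross G {v} ∩ {e | e ∈ L.map Prod.fst} =
      {e | e ∈ (L.filter (fun p => decide (G.ftail p = v ∨ G.fhead p = v))).map Prod.fst} := by
    ext x
    simp only [Set.mem_inter_iff, Set.mem_setOf_eq, List.mem_map, List.mem_filter]
    constructor
    · rintro ⟨hx, q, hq, rfl⟩
      refine ⟨q, ⟨hq, ?_⟩, rfl⟩
      rw [decide_eq_true_iff]
      rcases dart_endpoints (G := G) q with ⟨h1, h2⟩ | ⟨h1, h2⟩ <;>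
      · rw [mem_cross] at hx
        simp only [Set.mem_singleton_iff] at hx
        rw [h1, h2]
        tauto
    · rintro ⟨q, ⟨hq, hcond⟩, rfl⟩
      rw [decide_eq_true_iff] at hcond
      refine ⟨?_, q, hq, rfl⟩
      have hnlq := hnl q hq
      rw [mem_cross]
      simp only [Set.mem_singleton_iff]
      rcases dart_endpoints (G := G) q with ⟨h1, h2⟩ | ⟨h1, h2⟩ <;>
        rw [← h1, ← h2] <;>
      · constructor
        · intro h; rw [← h1, ← h2] at hnlq; intro h'; rw [h, ← h'] at hnlq; exact hnlq rfl
        · intro h; tauto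
  rw [hset]
  set c : E × Bool → Bool := fun p => decide (G.ftail p = v ∨ G.fhead p = v) with hc
  set lst := (L.filter c).map Prod.fst with hlst
  have hndlst : lst.Nodup := ((L.filter_sublist (p := c)).map Prod.fst).nodup hnd
  have h1 : {e | e ∈ lst} = (↑lst.toFinset : Set E) := by
    rw [List.coe_toFinset]
  rw [h1, Set.ncard_coe_finset, List.toFinset_card_of_nodup hndlst]
  have h2 : lst.length = L.countP c := by
    rw [hlst, List.length_map, List.countP_eq_length_filter]
  rw [h2]
  have h3 : L.countP c = L.countP (fun p => decide (G.ftail p = v)) +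
      L.countP (fun p => decide (G.fhead p = v)) := by
    apply countP_or_of_disj
    intro q hq hcon
    have := hnl q hq
    rcases dart_endpoints (G := G) q with ⟨ha, hb⟩ | ⟨ha, hb⟩ <;>
      rw [← ha, ← hb] at this <;> rw [hcon.1, hcon.2] at this <;> exact this rfl
  rw [h3]
  have key : ∀ (f : E × Bool → V) (l : List (E × Bool)),
      l.countP (fun p => decide (f p = v)) = (l.map f).countP (fun x => decide (x = v)) := by
    intro f l
    rw [List.countP_map]
    rfl
  obtain ⟨p, l, rfl⟩ : ∃ p l, L = p :: l := by
    cases L with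
    | nil => exact absurd rfl hLne
    | cons p l => exact ⟨p, l, rfl⟩
  have hshift := wk_shift hW
  have htp : G.ftail p = w := hW.2.1
  rw [key, key]
  have hhd : (p :: l).map G.fhead = l.map G.ftail ++ [w] := by
    rw [List.map_cons, hshift]
  have htl : (p :: l).map G.ftail = w :: l.map G.ftail := by
    rw [List.map_cons, htp]
  rw [hhd, htl]
  rw [List.countP_append, List.countP_cons]
  have hw1 : List.countP (fun x => decide (x = v)) [w] = if w = v then 1 else 0 := by
    by_cases h : w = v <;> simp [List.countP_cons, h]
  rw [hw1]
  set m := List.countP (fun x => decide (x = v)) (l.map G.ftail)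
  rw [Nat.even_iff]
  by_cases h : w = v <;> simp [h] <;> omega
lemma wk_split_at {G : MGraph V E} {S : Set E} :
    ∀ {l : List (E × Bool)} {a b w : V}, IsWk G S a l b → w ∈ a :: l.map G.fhead →
      ∃ l1 l2, l = l1 ++ l2 ∧ IsWk G S a l1 w ∧ IsWk G S w l2 b := by
  intro l
  induction l with
  | nil =>
      rintro a b w hab hw
      simp only [List.map_nil, List.mem_singleton] at hw
      subst hw
      exact ⟨[], [], rfl, rfl, hab⟩
  | cons p l ih =>
      rintro a b w ⟨hp, hta, hw'⟩ hw
      rcases List.mem_cons.mp hw with rfl | hw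
      · exact ⟨[], p :: l, rfl, rfl, ⟨hp, hta, hw'⟩⟩
      · rw [List.map_cons] at hw
        obtain ⟨l1, l2, heq, h1, h2⟩ := ih hw' hw
        exact ⟨p :: l1, l2, by rw [heq]; rfl, ⟨hp, hta, h1⟩, h2⟩

lemma wk_last_head {G : MGraph V E} {S : Set E} :
    ∀ {l : List (E × Bool)} {a b : V}, IsWk G S a l b → l ≠ [] →
      ∃ q ∈ l, G.fhead q = b := by
  intro l
  induction l with
  | nil => intro a b _ h; exact absurd rfl h
  | cons p l ih =>
      rintro a b ⟨hp, hta, hw⟩ -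
      cases l with
      | nil => exact ⟨p, List.mem_cons_self, hw⟩
      | cons r l' =>
          obtain ⟨q, hq, hqb⟩ := ih hw (by simp)
          exact ⟨q, List.mem_cons_of_mem _ hq, hqb⟩

lemma isCycle_even {G : MGraph V E} {Cy : Set E} (hCy : G.IsCycle Cy) : EvenSet G Cy := by
  obtain ⟨hne, hP, hmin⟩ := hCy
  by_cases hloop : ∃ e ∈ Cy, G.src e = G.tgt e
  · -- loop case: Cy is a single loop
    obtain ⟨e, he, hl⟩ := hloop
    have hdisj : ∀ U : Set V, cross G U ∩ {e} = ∅ := by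
      intro U
      ext x
      simp only [Set.mem_inter_iff, Set.mem_singleton_iff, Set.mem_empty_iff_false, iff_false,
        not_and]
      rintro hx rfl
      exact loop_not_mem_cross hl U hx
    have hsingle : Cy = {e} := by
      by_contra hne'
      apply hmin {e} ((Set.singleton_subset_iff.mpr he).ssubset_of_ne (fun h => hne' h.symm))
        ⟨e, rfl⟩
      intro Cu hCu
      obtain ⟨-, ⟨U, rfl⟩, -⟩ := isCut_iff.mp hCu
      rw [hdisj U]
      simp
    intro v
    rw [hsingle, hdisj]
    simp
  · push_neg at hloop
    have hdeg : ∀ b : V, ∀ f, f ∈ cross G {b} ∩ Cy →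
        ∃ e', e' ∈ cross G {b} ∩ Cy ∧ e' ≠ f := by
      intro b f hf
      by_contra hcon
      push_neg at hcon
      obtain ⟨C, hC, hfC, hCsub⟩ := exists_cut_through hf.1
      apply hP C hC
      have hCCy : C ∩ Cy = {f} := by
        apply subset_antisymm
        · intro g hg
          have : g ∈ cross G {b} ∩ Cy := ⟨hCsub hg.1, hg.2⟩
          by_contra hgf
          exact hgf (by simp [hcon g this])
        · intro g hg
          rw [Set.mem_singleton_iff] at hg
          subst hg
          exact ⟨hfC, hf.2⟩
      rw [hCCy, Set.ncard_singleton]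
    obtain ⟨e0, he0⟩ := hne
    set P' : ℕ → Prop := fun n => ∃ a b l, IsWk G Cy a l b ∧ (a :: l.map G.fhead).Nodup ∧
      l ≠ [] ∧ l.length = n with hP'
    have hP1 : P' 1 := by
      refine ⟨G.src e0, G.tgt e0, [(e0, true)], ⟨he0, by simp [MGraph.ftail], ?_⟩, ?_, by simp,
        by simp⟩
      · show G.fhead (e0, true) = G.tgt e0
        simp [MGraph.fhead]
      · simp [MGraph.fhead]
        exact hloop e0 he0
    have hcard1 : 1 ≤ Fintype.card V := by
      have : Nonempty V := ⟨G.src e0⟩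
      exact Fintype.card_pos
    set N := Nat.findGreatest P' (Fintype.card V) with hNdef
    have hN : P' N := Nat.findGreatest_spec hcard1 hP1
    obtain ⟨a, b, l, hW, hnd, hlne, hlen⟩ := hN
    obtain ⟨q, hql, hqb⟩ := wk_last_head hW hlne
    have hqCy : q.1 ∈ Cy := wk_mem_edge hW hql
    have hq_nl : G.src q.1 ≠ G.tgt q.1 := hloop _ hqCy
    have hq_cross : q.1 ∈ cross G {b} ∩ Cy := by
      refine ⟨?_, hqCy⟩
      rw [mem_cross]
      simp only [Set.mem_singleton_iff]
      rcases dart_endpoints (G := G) q with ⟨h1, h2⟩ | ⟨h1, h2⟩ <;> rw [← hqb, h2] <;>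
        rw [← h1, ← h2] at hq_nl <;> tauto
    obtain ⟨e', ⟨he'c, he'Cy⟩, he'ne⟩ := hdeg b q.1 hq_cross
    have he'nl : G.src e' ≠ G.tgt e' := hloop _ he'Cy
    rw [mem_cross] at he'c
    simp only [Set.mem_singleton_iff] at he'c
    set p' : E × Bool := if G.src e' = b then (e', true) else (e', false) with hp'
    have hp'1 : p'.1 = e' := by rw [hp']; split <;> rfl
    have htp' : G.ftail p' = b := by
      by_cases hsb : G.src e' = b
      · rw [hp', if_pos hsb]
        simpa [MGraph.ftail] using hsb
      · rw [hp', if_neg hsb]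
        have : G.tgt e' = b := by tauto
        simpa [MGraph.ftail] using this
    have hhp' : G.fhead p' ≠ b := by
      by_cases hsb : G.src e' = b
      · rw [hp', if_pos hsb]
        have : G.tgt e' ≠ b := by tauto
        simpa [MGraph.fhead] using this
      · rw [hp', if_neg hsb]
        simpa [MGraph.fhead] using hsb
    set w := G.fhead p' with hwdef
    have hWp' : IsWk G Cy b [p'] w := ⟨by rw [hp'1]; exact he'Cy, htp', rfl⟩
    by_cases hw : w ∈ a :: l.map G.fhead
    · -- close up a cycle
      obtain ⟨l1, l2, h12, hW1, hW2⟩ := wk_split_at hW hw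
      have hl2ne : l2 ≠ [] := by
        rintro rfl
        exact hhp' (hW2 : w = b)
      obtain ⟨q2, hq2, hq2b⟩ := wk_last_head hW2 hl2ne
      have hndv : (l.map G.fhead).Nodup := hnd.of_cons
      have hq2q : q2 = q :=
        List.inj_on_of_nodup_map hndv (by rw [h12]; exact List.mem_append_right _ hq2)
          hql (hq2b.trans hqb.symm)
      subst hq2q
      have hnd2 : (w :: l2.map G.fhead).Nodup := by
        obtain ⟨xs, hxs⟩ := wk_vertexList_decomp hW1
        have hre : a :: l.map G.fhead = xs ++ (w :: l2.map G.fhead) := by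
          rw [h12, List.map_append,
            show a :: (l1.map G.fhead ++ l2.map G.fhead) =
              (a :: l1.map G.fhead) ++ l2.map G.fhead from rfl, hxs]
          simp
        rw [hre] at hnd
        exact hnd.of_append_right
      have hnd2e : (l2.map Prod.fst).Nodup := wk_edges_nodup hW2 hnd2
      have he'notin : e' ∉ l2.map Prod.fst := by
        intro hmem
        obtain ⟨q', hq'2, hq'e⟩ := List.mem_map.mp hmem
        have hq'p : q'.1 = p'.1 := by rw [hq'e, hp'1]
        rcases dart_same_edge (G := G) hq'p with ⟨h1, h2⟩ | ⟨h1, h2⟩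
        · rw [htp'] at h1
          exact wk_tail_ne_last hW2 hnd2 hq'2 h1
        · rw [htp'] at h2
          have hq'q : q' = q2 :=
            List.inj_on_of_nodup_map hnd2.of_cons hq'2 hq2 (h2.trans hq2b.symm)
          apply he'ne
          rw [← hq'e, hq'q]
      set L := l2 ++ [p'] with hL
      have hWL : IsWk G Cy w L w := wk_append hW2 hWp'
      have hmap : L.map Prod.fst = l2.map Prod.fst ++ [e'] := by simp [hL, hp'1]
      have hLnd : (L.map Prod.fst).Nodup := by
        rw [hmap, List.nodup_append]
        refine ⟨hnd2e, List.nodup_singleton _, ?_⟩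
        intro x hx
        simp only [List.mem_singleton]
        rintro _ rfl rfl
        exact he'notin hx
      have hLnl : ∀ p ∈ L, G.src p.1 ≠ G.tgt p.1 := fun p hp => hloop _ (wk_mem_edge hWL hp)
      have hEvenZ := closed_trail_even hWL (by simp [hL]) hLnd hLnl
      have hZsub : {e | e ∈ L.map Prod.fst} ⊆ Cy := by
        intro x hx
        obtain ⟨q', hq', rfl⟩ := List.mem_map.mp hx
        exact wk_mem_edge hWL hq'
      have hZne : ({e | e ∈ L.map Prod.fst} : Set E).Nonempty :=
        ⟨e', by rw [Set.mem_setOf_eq, hmap]; exact List.mem_append_right _ (List.mem_singleton_self _)⟩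
      have hZeq : {e | e ∈ L.map Prod.fst} = Cy := by
        by_contra hneq
        exact hmin _ (hZsub.ssubset_of_ne hneq) hZne (fun Cu hCu => evenSet_cut_ncard hEvenZ hCu)
      rw [← hZeq]
      exact hEvenZ
    · -- extend the path: contradiction with maximality
      have hWext : IsWk G Cy a (l ++ [p']) w := wk_append hW hWp'
      have hndext : (a :: (l ++ [p']).map G.fhead).Nodup := by
        rw [List.map_append]
        have : a :: (l.map G.fhead ++ [w]) = (a :: l.map G.fhead) ++ [w] := by simp
        rw [show (l.map G.fhead ++ List.map G.fhead [p']) = l.map G.fhead ++ [w] by rfl, this,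
          List.nodup_append]
        refine ⟨hnd, List.nodup_singleton _, ?_⟩
        intro x hx
        simp only [List.mem_singleton]
        rintro _ rfl rfl
        exact hw hx
      have hlenext : N + 2 ≤ Fintype.card V := by
        have := hndext.length_le_card
        simp only [List.length_cons, List.length_append, List.length_map, hlen,
          List.length_singleton] at this
        omega
      have : N + 1 ≤ N :=
        Nat.le_findGreatest (by omega)
          ⟨a, w, l ++ [p'], hWext, hndext, by simp, by simp [hlen]⟩
      omega
/-- Every nonempty set meeting every cut in ≠ 1 edges contains a cycle. -/
lemma exists_cycle_subset {G : MGraph V E} {B : Set E} (hne : B.Nonempty)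
    (hP : ∀ Cu : Set E, G.IsCut Cu → (Cu ∩ B).ncard ≠ 1) :
    ∃ D : Set E, G.IsCycle D ∧ D ⊆ B := by
  have hex : ∃ n, ∃ D : Set E, D ⊆ B ∧ D.Nonempty ∧
      (∀ Cu : Set E, G.IsCut Cu → (Cu ∩ D).ncard ≠ 1) ∧ D.ncard = n :=
    ⟨B.ncard, B, subset_rfl, hne, hP, rfl⟩
  obtain ⟨D, hDB, hDne, hDP, hDcard⟩ := Nat.find_spec hex
  refine ⟨D, ⟨hDne, hDP, ?_⟩, hDB⟩
  intro C' hC' hC'ne hC'P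
  have : C'.ncard < Nat.find hex := by
    rw [← hDcard]
    exact Set.ncard_lt_ncard hC' (Set.toFinite _)
  exact Nat.find_min hex this ⟨C', hC'.subset.trans hDB, hC'ne, hC'P, rfl⟩

/-- Every nonempty even set contains a cycle through each of its edges. -/
lemma exists_cycle_through {G : MGraph V E} {B : Set E} (hB : EvenSet G B) {e : E}
    (he : e ∈ B) : ∃ Cy : Set E, G.IsCycle Cy ∧ e ∈ Cy ∧ Cy ⊆ B := by
  have hex : ∃ n, ∃ A : Set E, A ⊆ B ∧ EvenSet G A ∧ e ∈ A ∧ A.ncard = n :=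
    ⟨B.ncard, B, subset_rfl, hB, he, rfl⟩
  obtain ⟨A, hAB, hAev, heA, hAcard⟩ := Nat.find_spec hex
  refine ⟨A, ⟨⟨e, heA⟩, fun Cu hCu => evenSet_cut_ncard hAev hCu, ?_⟩, heA, hAB⟩
  intro C' hC' hC'ne hC'P
  obtain ⟨D, hD, hDC'⟩ := exists_cycle_subset hC'ne hC'P
  have hDev : EvenSet G D := isCycle_even hD
  have hDA : D ⊆ A := hDC'.trans hC'.subset
  by_cases heD : e ∈ D
  · have hDneA : D ≠ A := by
      rintro rfl
      exact hC'.not_subset hDC'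
    have : D.ncard < Nat.find hex := by
      rw [← hAcard]
      exact Set.ncard_lt_ncard (hDA.ssubset_of_ne hDneA) (Set.toFinite _)
    exact Nat.find_min hex this ⟨D, hDA.trans hAB, hDev, heD, rfl⟩
  · have hsd : symmDiff A D = A \ D := by
      rw [Set.symmDiff_def, Set.diff_eq_empty.mpr hDA]
      simp
    have hsdev : EvenSet G (symmDiff A D) := evenSet_symmDiff hAev hDev
    have hlt : (symmDiff A D).ncard < Nat.find hex := by
      rw [← hAcard, hsd]
      apply Set.ncard_lt_ncard _ (Set.toFinite _)
      constructor
      · exact Set.diff_subset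
      · intro hsub
        obtain ⟨f, hf⟩ := hD.1
        exact (hsub (hDA hf)).2 hf
    exact Nat.find_min hex hlt
      ⟨symmDiff A D, (hsd ▸ Set.diff_subset).trans hAB, hsdev, hsd ▸ ⟨heA, heD⟩, rfl⟩

/-- Circuit elimination. -/
lemma cycle_elimination {G : MGraph V E} {C1 C2 : Set E} (h1 : G.IsCycle C1) (h2 : G.IsCycle C2)
    {e f : E} (he1 : e ∈ C1) (he2 : e ∉ C2) (hf1 : f ∈ C1) (hf2 : f ∈ C2) :
    ∃ C : Set E, G.IsCycle C ∧ e ∈ C ∧ C ⊆ (C1 ∪ C2) \ {f} := by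
  have hB : EvenSet G (symmDiff C1 C2) := evenSet_symmDiff (isCycle_even h1) (isCycle_even h2)
  have heB : e ∈ symmDiff C1 C2 := Set.mem_symmDiff.mpr (Or.inl ⟨he1, he2⟩)
  obtain ⟨Cy, hCy, heCy, hCysub⟩ := exists_cycle_through hB heB
  refine ⟨Cy, hCy, heCy, hCysub.trans ?_⟩
  intro g hg
  rw [Set.mem_symmDiff] at hg
  constructor
  · rcases hg with ⟨hg, -⟩ | ⟨hg, -⟩
    · exact Or.inl hg
    · exact Or.inr hg
  · rintro rfl
    rcases hg with ⟨-, hg⟩ | ⟨-, hg⟩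
    · exact hg hf2
    · exact hg hf1
section Toggle

variable [LinearOrder E] {G : MGraph V E}

lemma uni_I {S T A : Set E} {f₀ : E} (hST : ∀ g : E, g ≠ f₀ → (g ∈ S ↔ g ∈ T))
    (hSA : ∀ g : E, g ≠ f₀ → (g ∈ S ↔ g ∈ A)) (hact : f₀ ∈ G.Iact A ∪ G.Lact A) :
    G.Iact S ⊆ G.Iact T := by
  rintro e ⟨C, hC, heC, hCS, hCmin⟩
  by_cases hf₀ : f₀ ∈ C ∧ f₀ ≠ e
  · obtain ⟨hf₀C, hf₀e⟩ := hf₀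
    have hf₀S : f₀ ∉ S := hCS f₀ hf₀C hf₀e
    have hef₀ : e < f₀ := lt_of_le_of_ne (hCmin f₀ hf₀C) (Ne.symm hf₀e)
    rcases hact with hIact | hLact
    · obtain ⟨D, hD, hf₀D, hDA, hDmin⟩ := hIact
      have heD : e ∉ D := fun h => absurd (hDmin e h) (not_le.mpr hef₀)
      obtain ⟨C', hC', heC', hC'sub⟩ := cut_elimination hC hD heC heD hf₀C hf₀D
      refine ⟨C', hC', heC', ?_, ?_⟩
      · intro g hg hge
        have hgCD := hC'sub hg
        have hgf₀ : g ≠ f₀ := by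
          have := hgCD.2
          simpa using this
        intro hgT
        have hgS : g ∈ S := (hST g hgf₀).mpr hgT
        rcases hgCD.1 with hgC | hgD
        · exact hCS g hgC hge hgS
        · exact hDA g hgD hgf₀ ((hSA g hgf₀).mp hgS)
      · intro g hg
        rcases (hC'sub hg).1 with hgC | hgD
        · exact hCmin g hgC
        · exact le_of_lt (lt_of_lt_of_le hef₀ (hDmin g hgD))
    · obtain ⟨D, hD, hf₀D, hDA, hDmin⟩ := hLact
      obtain ⟨g, hgC, hgD, hgf₀⟩ := cut_cycle_companion hC hD hf₀C hf₀D
      exfalso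
      rcases hDA g hgD with hge | hgA
      · exact hgf₀ hge
      · by_cases hge : g = e
        · subst hge
          exact absurd (hDmin g hgD) (not_le.mpr hef₀)
        · exact hCS g hgC hge ((hSA g hgf₀).mpr hgA)
  · refine ⟨C, hC, heC, ?_, hCmin⟩
    intro g hg hge
    intro hgT
    by_cases hgf : g = f₀
    · subst hgf
      exact hf₀ ⟨hg, hge⟩
    · exact hCS g hg hge ((hST g hgf).mpr hgT)

lemma uni_L {S T A : Set E} {f₀ : E} (hST : ∀ g : E, g ≠ f₀ → (g ∈ S ↔ g ∈ T))
    (hSA : ∀ g : E, g ≠ f₀ → (g ∈ S ↔ g ∈ A)) (hact : f₀ ∈ G.Iact A ∪ G.Lact A) :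
    G.Lact S ⊆ G.Lact T := by
  rintro e ⟨C, hC, heC, hCS, hCmin⟩
  by_cases hf₀ : f₀ ∈ C ∧ f₀ ≠ e
  · obtain ⟨hf₀C, hf₀e⟩ := hf₀
    have hef₀ : e < f₀ := lt_of_le_of_ne (hCmin f₀ hf₀C) (Ne.symm hf₀e)
    rcases hact with hIact | hLact
    · obtain ⟨D, hD, hf₀D, hDA, hDmin⟩ := hIact
      obtain ⟨g, hgD, hgC, hgf₀⟩ := cut_cycle_companion hD hC hf₀D hf₀C
      exfalso
      by_cases hge : g = e
      · subst hge
        exact absurd (hDmin g hgD) (not_le.mpr hef₀)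
      · rcases hCS g hgC with h | hgS
        · exact hge h
        · exact hDA g hgD hgf₀ ((hSA g hgf₀).mp hgS)
    · obtain ⟨D, hD, hf₀D, hDA, hDmin⟩ := hLact
      have heD : e ∉ D := fun h => absurd (hDmin e h) (not_le.mpr hef₀)
      obtain ⟨C', hC', heC', hC'sub⟩ := cycle_elimination hC hD heC heD hf₀C hf₀D
      refine ⟨C', hC', heC', ?_, ?_⟩
      · intro g hg
        have hgCD := hC'sub hg
        have hgf₀ : g ≠ f₀ := by
          have := hgCD.2
          simpa using this
        by_cases hge : g = e
        · exact Or.inl hge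
        · right
          rcases hgCD.1 with hgC | hgD
          · rcases hCS g hgC with h | hgS
            · exact absurd h hge
            · exact (hST g hgf₀).mp hgS
          · rcases hDA g hgD with h | hgA
            · exact absurd h hgf₀
            · exact (hST g hgf₀).mp ((hSA g hgf₀).mpr hgA)
      · intro g hg
        rcases (hC'sub hg).1 with hgC | hgD
        · exact hCmin g hgC
        · exact le_of_lt (lt_of_lt_of_le hef₀ (hDmin g hgD))
  · refine ⟨C, hC, heC, ?_, hCmin⟩
    intro g hg
    rcases hCS g hg with h | hgS
    · exact Or.inl h
    · by_cases hgf : g = f₀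
      · subst hgf
        left
        by_contra hge
        exact hf₀ ⟨hg, hge⟩
      · exact Or.inr ((hST g hgf).mp hgS)

lemma toggle {S : Set E} {f₀ : E} (hact : f₀ ∈ G.Iact S ∪ G.Lact S) :
    G.Iact S = G.Iact (symmDiff S {f₀}) ∧ G.Lact S = G.Lact (symmDiff S {f₀}) := by
  have hST : ∀ g : E, g ≠ f₀ → (g ∈ S ↔ g ∈ symmDiff S {f₀}) := by
    intro g hg
    rw [Set.mem_symmDiff]
    simp only [Set.mem_singleton_iff, hg]
    tauto
  have hTS : ∀ g : E, g ≠ f₀ → (g ∈ symmDiff S {f₀} ↔ g ∈ S) := fun g hg => (hST g hg).symm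
  have hid : ∀ g : E, g ≠ f₀ → (g ∈ S ↔ g ∈ S) := fun _ _ => Iff.rfl
  exact ⟨subset_antisymm (uni_I hST hid hact) (uni_I hTS hTS hact),
    subset_antisymm (uni_L hST hid hact) (uni_L hTS hTS hact)⟩

lemma main_aux : ∀ (n : ℕ) (S T : Set E),
    symmDiff S T ⊆ G.Iact S ∪ G.Lact S → (symmDiff S T).ncard = n →
    G.Iact S = G.Iact T ∧ G.Lact S = G.Lact T := by
  intro n
  induction n with
  | zero =>
      intro S T _ hcard
      have : symmDiff S T = ∅ := (Set.ncard_eq_zero (Set.toFinite _)).mp hcard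
      have hST : S = T := symmDiff_eq_bot.mp this
      subst hST
      exact ⟨rfl, rfl⟩
  | succ n ih =>
      intro S T hsub hcard
      have hne : (symmDiff S T).Nonempty := by
        rw [Set.nonempty_iff_ne_empty]
        intro h
        rw [h] at hcard
        simp at hcard
      obtain ⟨f₀, hf₀⟩ := hne
      have hact := hsub hf₀
      obtain ⟨eqI, eqL⟩ := toggle hact
      set S' := symmDiff S {f₀} with hS'
      have hkey : symmDiff S' T = symmDiff S T \ {f₀} := by
        rw [Set.mem_symmDiff] at hf₀
        ext g
        by_cases hg : g = f₀
        · subst hg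
          simp only [hS', Set.mem_symmDiff, Set.mem_diff, Set.mem_singleton_iff]
          tauto
        · simp only [hS', Set.mem_symmDiff, Set.mem_diff, Set.mem_singleton_iff, hg]
          tauto
      have hcard' : (symmDiff S' T).ncard = n := by
        rw [hkey, Set.ncard_diff_singleton_of_mem hf₀, hcard]
        rfl
      have hsub' : symmDiff S' T ⊆ G.Iact S' ∪ G.Lact S' := by
        rw [hkey, ← eqI, ← eqL]
        exact fun x hx => hsub hx.1
      obtain ⟨hI, hL⟩ := ih S' T hsub' hcard'
      exact ⟨eqI.trans hI, eqL.trans hL⟩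

end Toggle

end GT

/-- Gordon–Traldi: if `S \ (Î(S) ∪ L̂(S)) ⊆ T ⊆ S ∪ Î(S) ∪ L̂(S)`
then `Î(S) = Î(T)` and `L̂(S) = L̂(T)`. -/
theorem activities_interval_invariance {V E : Type} [Fintype V] [Fintype E]
    [LinearOrder E] (G : MGraph V E) (S T : Set E)
    (h1 : S \ (G.Iact S ∪ G.Lact S) ⊆ T) (h2 : T ⊆ S ∪ G.Iact S ∪ G.Lact S) :
    G.Iact S = G.Iact T ∧ G.Lact S = G.Lact T := by
  apply GT.main_aux (symmDiff S T).ncard S T _ rfl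
  intro x hx
  rw [Set.mem_symmDiff] at hx
  rcases hx with ⟨hxS, hxT⟩ | ⟨hxT, hxS⟩
  · by_contra h
    exact hxT (h1 ⟨hxS, h⟩)
  · rcases h2 hxT with h | h
    · rcases h with h | h
      · exact absurd h hxS
      · exact Or.inl h
    · exact Or.inr h
end

section
/- Let G be a graph with n vertices, κ connected components, and a total order on its edges. For every spanning subgraph S ⊆ E(G), the number of cut active edges of S that are not in S equals κ(S) − κ, where κ(S) is the number of connected components of the spanning subgraph (V(G), S). -/
open scoped Classical

namespace OrGraph

variable {V E : Type} (G : OrGraph V E)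

lemma step_mono {R R' : Set E} (h : R ⊆ R') {a b : V} (hab : G.step R a b) :
    G.step R' a b := by
  obtain ⟨e, he, hor⟩ := hab; exact ⟨e, h he, hor⟩

lemma reach_mono {R R' : Set E} (h : R ⊆ R') {a b : V}
    (hab : Quot.mk (G.step R) a = Quot.mk (G.step R) b) :
    Quot.mk (G.step R') a = Quot.mk (G.step R') b := by
  rw [Quot.eq] at hab ⊢
  exact hab.mono fun x y hxy => G.step_mono h hxy

lemma kappa_insert_of_reach [Finite V] {R : Set E} {e : E}
    (h : Quot.mk (G.step R) (G.src e) = Quot.mk (G.step R) (G.tgt e)) :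
    G.kappa (insert e R) = G.kappa R := by
  apply Nat.card_congr
  refine ⟨Quot.lift (Quot.mk (G.step R)) ?_, Quot.lift (Quot.mk (G.step (insert e R))) ?_, ?_, ?_⟩
  · rintro a b ⟨f, hf, hor⟩
    rcases Set.mem_insert_iff.1 hf with rfl | hfR
    · rcases hor with ⟨ha, hb⟩ | ⟨ha, hb⟩
      · rw [← ha, ← hb]; exact h
      · rw [← ha, ← hb]; exact h.symm
    · exact Quot.sound ⟨f, hfR, hor⟩
  · intro a b hab; exact Quot.sound (G.step_mono (Set.subset_insert _ _) hab)
  · intro q; induction q using Quot.ind; rfl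
  · intro q; induction q using Quot.ind; rfl

lemma kappa_insert_of_not_reach [Finite V] {R : Set E} {e : E}
    (h : Quot.mk (G.step R) (G.src e) ≠ Quot.mk (G.step R) (G.tgt e)) :
    G.kappa R = G.kappa (insert e R) + 1 := by
  classical
  have key : G.kappa (insert e R)
      = Nat.card {x : Quot (G.step R) // x ≠ Quot.mk (G.step R) (G.src e)} := by
    apply Nat.card_congr
    refine ⟨Quot.lift (fun v => if hc : Quot.mk (G.step R) v = Quot.mk (G.step R) (G.src e)
        then ⟨Quot.mk (G.step R) (G.tgt e), fun hh => h hh.symm⟩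
        else ⟨Quot.mk (G.step R) v, hc⟩) ?_,
      fun x => Quot.lift (Quot.mk (G.step (insert e R)))
        (fun a b hab => Quot.sound (G.step_mono (Set.subset_insert _ _) hab)) x.1, ?_, ?_⟩
    · rintro a b ⟨f, hf, hor⟩
      have hcase : Quot.mk (G.step R) a = Quot.mk (G.step R) b ∨
          ((a = G.src e ∧ b = G.tgt e) ∨ (a = G.tgt e ∧ b = G.src e)) := by
        rcases Set.mem_insert_iff.1 hf with rfl | hfR
        · rcases hor with ⟨ha, hb⟩ | ⟨ha, hb⟩
          · exact Or.inr (Or.inl ⟨ha.symm, hb.symm⟩)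
          · exact Or.inr (Or.inr ⟨hb.symm, ha.symm⟩)
        · exact Or.inl (Quot.sound ⟨f, hfR, hor⟩)
      rcases hcase with hab | ⟨rfl, rfl⟩ | ⟨rfl, rfl⟩
      · simp only [hab]
      · rw [dif_pos rfl, dif_neg (fun hh : Quot.mk (G.step R) (G.tgt e)
          = Quot.mk (G.step R) (G.src e) => h hh.symm)]
      · rw [dif_neg (fun hh : Quot.mk (G.step R) (G.tgt e)
          = Quot.mk (G.step R) (G.src e) => h hh.symm), dif_pos rfl]
    · intro q
      induction q using Quot.ind with | _ v => ?_
      by_cases hc : Quot.mk (G.step R) v = Quot.mk (G.step R) (G.src e)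
      · simp only [dif_pos hc]
        have h1 : Quot.mk (G.step (insert e R)) (G.tgt e)
            = Quot.mk (G.step (insert e R)) (G.src e) :=
          (Quot.sound ⟨e, Set.mem_insert _ _, Or.inl ⟨rfl, rfl⟩⟩).symm
        exact h1.trans (G.reach_mono (Set.subset_insert _ _) hc).symm
      · simp only [dif_neg hc]
    · rintro ⟨x, hx⟩
      induction x using Quot.ind with | _ v => ?_
      simp only [dif_neg hx]
  have h2 : Nat.card {x : Quot (G.step R) // x ≠ Quot.mk (G.step R) (G.src e)} + 1
      = G.kappa R := by
    have e1 : {x : Quot (G.step R) | x ≠ Quot.mk (G.step R) (G.src e)}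
        = Set.univ \ {Quot.mk (G.step R) (G.src e)} := by ext x; simp
    have := Set.ncard_diff_singleton_add_one
      (Set.mem_univ (Quot.mk (G.step R) (G.src e))) Set.finite_univ
    calc Nat.card {x : Quot (G.step R) // x ≠ Quot.mk (G.step R) (G.src e)} + 1
        = {x : Quot (G.step R) | x ≠ Quot.mk (G.step R) (G.src e)}.ncard + 1 := by
          rw [← Nat.card_coe_set_eq]; rfl
      _ = (Set.univ \ {Quot.mk (G.step R) (G.src e)}).ncard + 1 := by rw [e1]
      _ = (Set.univ : Set (Quot (G.step R))).ncard := this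
      _ = G.kappa R := Set.ncard_univ _
  omega

lemma kappa_lt [Finite V] {R : Set E} {a b : V}
    (hR : Quot.mk (G.step R) a ≠ Quot.mk (G.step R) b)
    (huniv : Quot.mk (G.step (Set.univ : Set E)) a
      = Quot.mk (G.step (Set.univ : Set E)) b) :
    G.kappa Set.univ < G.kappa R := by
  classical
  haveI : Fintype (Quot (G.step R)) := Fintype.ofFinite _
  haveI : Fintype (Quot (G.step (Set.univ : Set E))) := Fintype.ofFinite _
  rw [kappa, kappa, Nat.card_eq_fintype_card, Nat.card_eq_fintype_card]
  refine Fintype.card_lt_of_surjective_not_injective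
    (Quot.lift (Quot.mk (G.step (Set.univ : Set E)))
      (fun x y hxy => Quot.sound (G.step_mono (Set.subset_univ _) hxy))) ?_ ?_
  · intro q
    induction q using Quot.ind with | _ v => exact ⟨Quot.mk _ v, rfl⟩
  · intro hinj
    exact hR (hinj huniv)

lemma Iact_diff_eq [Finite V] [LinearOrder E] (S : Set E) :
    G.Iact S \ S = {e | e ∉ S ∧ Quot.mk (G.step (S ∪ {f | f < e})) (G.src e)
      ≠ Quot.mk (G.step (S ∪ {f | f < e})) (G.tgt e)} := by
  ext e
  simp only [Set.mem_diff, Set.mem_setOf_eq, Iact]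
  constructor
  · rintro ⟨⟨C, hC, heC, hCS, hmin⟩, heS⟩
    refine ⟨heS, fun hreach => ?_⟩
    have hsub : S ∪ {f | f < e} ⊆ Cᶜ := by
      rintro f (hf | hf) hfC
      · exact hCS f hfC (by rintro rfl; exact heS hf) hf
      · exact absurd (hmin f hfC) (not_le.2 hf)
    have hre : Quot.mk (G.step Cᶜ) (G.src e) = Quot.mk (G.step Cᶜ) (G.tgt e) :=
      G.reach_mono hsub hreach
    have hk := G.kappa_insert_of_reach hre
    have hins : insert e Cᶜ = (C \ {e})ᶜ := by
      ext f; by_cases hf : f = e <;> simp [hf]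
    rcases eq_or_ne (C \ {e}) ∅ with hCe | hCe
    · have hCsing : C = {e} :=
        Set.Subset.antisymm (Set.diff_eq_empty.1 hCe) (Set.singleton_subset_iff.2 heC)
      have : insert e Cᶜ = (Set.univ : Set E) := by
        rw [hins, hCsing]; simp
      rw [this] at hk
      exact absurd hk.symm (ne_of_gt hC.2.1)
    · have hss : C \ {e} ⊂ C := by
        refine ⟨Set.diff_subset, fun hsub2 => ?_⟩
        have := hsub2 heC
        simp at this
      refine hC.2.2 _ hss (Set.nonempty_iff_ne_empty.2 hCe) ?_
      rw [← hins, hk]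
      exact hC.2.1
  · rintro ⟨heS, hne⟩
    refine ⟨?_, heS⟩
    set R : Set E := S ∪ {f | f < e} with hRdef
    set U : Set V := {v | Quot.mk (G.step R) v = Quot.mk (G.step R) (G.src e)} with hUdef
    set W : Set E := {g | ¬ (G.src g ∈ U ↔ G.tgt g ∈ U)} with hWdef
    set U' : Set V := {v | Quot.mk (G.step Wᶜ) v = Quot.mk (G.step Wᶜ) (G.tgt e)} with hU'def
    set C : Set E := {g | (G.src g ∈ U ∧ G.tgt g ∈ U') ∨ (G.tgt g ∈ U ∧ G.src g ∈ U')}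
      with hCdef
    -- basic facts
    have hUmem : ∀ {a b : V}, Quot.mk (G.step R) a = Quot.mk (G.step R) b →
        (a ∈ U ↔ b ∈ U) := by
      intro a b hab
      simp only [hUdef, Set.mem_setOf_eq]
      rw [hab]
    have hRW : R ⊆ Wᶜ := by
      intro g hg
      simp only [hWdef, Set.mem_compl_iff, Set.mem_setOf_eq, not_not]
      exact hUmem (Quot.sound ⟨g, hg, Or.inl ⟨rfl, rfl⟩⟩)
    have hUWstep : ∀ {a b : V}, G.step Wᶜ a b → (a ∈ U ↔ b ∈ U) := by
      rintro a b ⟨g, hg, hor⟩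
      have := Set.notMem_compl_iff.1 (fun hh : g ∈ Wᶜᶜ => (by simpa using hh : ¬ _) hg)
      have hgiff : G.src g ∈ U ↔ G.tgt g ∈ U := by
        by_contra hcon
        exact hg hcon
      rcases hor with ⟨ha, hb⟩ | ⟨ha, hb⟩
      · rw [← ha, ← hb]; exact hgiff
      · rw [← ha, ← hb]; exact hgiff.symm
    have hUWiff : ∀ {a b : V}, Quot.mk (G.step Wᶜ) a = Quot.mk (G.step Wᶜ) b →
        (a ∈ U ↔ b ∈ U) := by
      intro a b hab
      rw [Quot.eq] at hab
      induction hab with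
      | rel x y hxy => exact hUWstep hxy
      | refl x => exact Iff.rfl
      | symm x y _ ih => exact ih.symm
      | trans x y z _ _ ih1 ih2 => exact ih1.trans ih2
    have hsrcU : G.src e ∈ U := by simp [hUdef]
    have htgtU : G.tgt e ∉ U := by
      simp only [hUdef, Set.mem_setOf_eq]
      exact fun hh => hne hh.symm
    have hU'notU : ∀ {v : V}, v ∈ U' → v ∉ U := by
      intro v hv
      have : v ∈ U ↔ G.tgt e ∈ U := hUWiff hv
      exact fun hvU => htgtU (this.1 hvU)
    have heC : e ∈ C := Or.inl ⟨hsrcU, by simp [hU'def]⟩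
    have hCW : C ⊆ W := by
      rintro g (⟨hs, ht⟩ | ⟨ht, hs⟩) <;>
        simp only [hWdef, Set.mem_setOf_eq]
      · exact fun hiff => hU'notU ht (hiff.1 hs)
      · exact fun hiff => hU'notU hs (hiff.2 ht)
    have hCR : ∀ g ∈ C, g ∉ R := fun g hg hgR => hRW hgR (hCW hg)
    -- C-complement preserves U'
    have hCstep : ∀ {a b : V}, G.step Cᶜ a b → (a ∈ U' ↔ b ∈ U') := by
      rintro a b ⟨g, hg, hor⟩
      have hgC : g ∉ C := hg
      have hgiff : G.src g ∈ U' ↔ G.tgt g ∈ U' := by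
        by_cases hgW : g ∈ W
        · have hcross : ¬ (G.src g ∈ U ↔ G.tgt g ∈ U) := hgW
          constructor
          · intro hs
            by_contra ht
            have hsU : G.src g ∉ U := hU'notU hs
            have htU : G.tgt g ∈ U := by
              by_contra htU
              exact hcross ⟨fun h => absurd h hsU, fun h => absurd h htU⟩
            exact hgC (Or.inr ⟨htU, hs⟩)
          · intro ht
            by_contra hs
            have htUn : G.tgt g ∉ U := hU'notU ht
            have hsU : G.src g ∈ U := by
              by_contra hsU
              exact hcross ⟨fun h => absurd h hsU, fun h => absurd h htUn⟩
            exact hgC (Or.inl ⟨hsU, ht⟩)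
        · have : Quot.mk (G.step Wᶜ) (G.src g) = Quot.mk (G.step Wᶜ) (G.tgt g) :=
            Quot.sound ⟨g, hgW, Or.inl ⟨rfl, rfl⟩⟩
          simp only [hU'def, Set.mem_setOf_eq]
          rw [this]
      rcases hor with ⟨ha, hb⟩ | ⟨ha, hb⟩
      · rw [← ha, ← hb]; exact hgiff
      · rw [← ha, ← hb]; exact hgiff.symm
    have hCiff : ∀ {a b : V}, Quot.mk (G.step Cᶜ) a = Quot.mk (G.step Cᶜ) b →
        (a ∈ U' ↔ b ∈ U') := by
      intro a b hab
      rw [Quot.eq] at hab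
      induction hab with
      | rel x y hxy => exact hCstep hxy
      | refl x => exact Iff.rfl
      | symm x y _ ih => exact ih.symm
      | trans x y z _ _ ih1 ih2 => exact ih1.trans ih2
    have hCdisc : Quot.mk (G.step Cᶜ) (G.src e) ≠ Quot.mk (G.step Cᶜ) (G.tgt e) := by
      intro hh
      have : G.src e ∈ U' ↔ G.tgt e ∈ U' := hCiff hh
      have h1 : G.tgt e ∈ U' := by simp [hU'def]
      exact hU'notU (this.2 h1) hsrcU
    -- IsCut
    refine ⟨C, ⟨⟨e, heC⟩, ?_, ?_⟩, heC, ?_, ?_⟩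
    · exact G.kappa_lt hCdisc (Quot.sound ⟨e, Set.mem_univ e, Or.inl ⟨rfl, rfl⟩⟩)
    · -- minimality
      intro C' hss hne' hgt
      obtain ⟨g₀, hg₀C, hg₀C'⟩ := Set.exists_of_ssubset hss
      have hWC' : Wᶜ ⊆ C'ᶜ := Set.compl_subset_compl.2 (hss.1.trans hCW)
      have hRC' : R ⊆ C'ᶜ := hRW.trans hWC'
      -- every vertex of U is C'ᶜ-connected to src e, every of U' to tgt e
      have hUconn : ∀ v ∈ U, Quot.mk (G.step C'ᶜ) v = Quot.mk (G.step C'ᶜ) (G.src e) :=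
        fun v hv => G.reach_mono hRC' hv
      have hU'conn : ∀ v ∈ U', Quot.mk (G.step C'ᶜ) v = Quot.mk (G.step C'ᶜ) (G.tgt e) :=
        fun v hv => G.reach_mono hWC' hv
      -- g₀ connects U to U' in C'ᶜ
      have hbridge : Quot.mk (G.step C'ᶜ) (G.src e) = Quot.mk (G.step C'ᶜ) (G.tgt e) := by
        have hg0 : Quot.mk (G.step C'ᶜ) (G.src g₀) = Quot.mk (G.step C'ᶜ) (G.tgt g₀) :=
          Quot.sound ⟨g₀, hg₀C', Or.inl ⟨rfl, rfl⟩⟩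
        rcases hg₀C with ⟨hs, ht⟩ | ⟨ht, hs⟩
        · exact (hUconn _ hs).symm.trans (hg0.trans (hU'conn _ ht))
        · exact (hUconn _ ht).symm.trans (hg0.symm.trans (hU'conn _ hs))
      have hconnC : ∀ g ∈ C, Quot.mk (G.step C'ᶜ) (G.src g)
          = Quot.mk (G.step C'ᶜ) (G.tgt g) := by
        rintro g (⟨hs, ht⟩ | ⟨ht, hs⟩)
        · exact (hUconn _ hs).trans (hbridge.trans (hU'conn _ ht).symm)
        · exact (hU'conn _ hs).trans (hbridge.symm.trans (hUconn _ ht).symm)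
      -- the natural map Quot(C'ᶜ) → Quot(univ) is injective
      have hstepkey : ∀ {a b : V}, G.step Set.univ a b →
          Quot.mk (G.step C'ᶜ) a = Quot.mk (G.step C'ᶜ) b := by
        rintro a b ⟨g, _, hor⟩
        by_cases hgC' : g ∈ C'
        · have := hconnC g (hss.1 hgC')
          rcases hor with ⟨ha, hb⟩ | ⟨ha, hb⟩
          · rw [← ha, ← hb]; exact this
          · rw [← ha, ← hb]; exact this.symm
        · exact Quot.sound ⟨g, hgC', hor⟩
      have huniv_to : ∀ {a b : V}, Quot.mk (G.step (Set.univ : Set E)) a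
          = Quot.mk (G.step (Set.univ : Set E)) b →
          Quot.mk (G.step C'ᶜ) a = Quot.mk (G.step C'ᶜ) b := by
        intro a b hab
        rw [Quot.eq] at hab
        induction hab with
        | rel x y hxy => exact hstepkey hxy
        | refl x => rfl
        | symm x y _ ih => exact ih.symm
        | trans x y z _ _ ih1 ih2 => exact ih1.trans ih2
      have hinj : Function.Injective (Quot.lift (Quot.mk (G.step (Set.univ : Set E)))
          (fun a b hab => Quot.sound (G.step_mono (Set.subset_univ _) hab))
          : Quot (G.step C'ᶜ) → Quot (G.step (Set.univ : Set E))) := by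
        intro q1 q2
        induction q1 using Quot.ind with | _ a => ?_
        induction q2 using Quot.ind with | _ b => ?_
        intro hq
        exact huniv_to hq
      have hle : G.kappa C'ᶜ ≤ G.kappa Set.univ :=
        Nat.card_le_card_of_injective _ hinj
      omega
    · exact fun f hf _ hfS => hCR f hf (Or.inl hfS)
    · intro f hf
      by_contra hlt
      exact hCR f hf (Or.inr (not_le.1 hlt))
lemma count_lemma [Finite V] [LinearOrder E] (S : Set E) (A : Finset E) :
    Disjoint (↑A : Set E) S →
      (A.filter (fun e => Quot.mk (G.step (S ∪ {f ∈ (↑A : Set E) | f < e})) (G.src e)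
          ≠ Quot.mk (G.step (S ∪ {f ∈ (↑A : Set E) | f < e})) (G.tgt e))).card
        + G.kappa (S ∪ ↑A) = G.kappa S := by
  classical
  induction A using Finset.induction_on_max with
  | empty => intro _; simp
  | insert a s hmax ih =>
    intro hdisj
    have has : a ∉ s := fun h => lt_irrefl a (hmax a h)
    have hdisj' : Disjoint (↑s : Set E) S := by
      refine Set.disjoint_left.2 fun f hf hfS => ?_
      exact Set.disjoint_left.1 hdisj (by simp [hf]) hfS
    have hins : (↑(insert a s) : Set E) = insert a ↑s := by simp
    have hconda : S ∪ {f ∈ (↑(insert a s) : Set E) | f < a} = S ∪ ↑s := by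
      rw [hins]; ext f
      simp only [Set.mem_union, Set.mem_setOf_eq, Set.mem_insert_iff, Finset.mem_coe]
      constructor
      · rintro (h | ⟨(rfl | h), hlt⟩)
        · exact Or.inl h
        · exact absurd hlt (lt_irrefl f)
        · exact Or.inr h
      · rintro (h | h)
        · exact Or.inl h
        · exact Or.inr ⟨Or.inr h, hmax f h⟩
    have hconde : ∀ e ∈ s, (S ∪ {f ∈ (↑(insert a s) : Set E) | f < e})
        = S ∪ {f ∈ (↑s : Set E) | f < e} := by
      intro e he
      rw [hins]; ext f
      simp only [Set.mem_union, Set.mem_setOf_eq, Set.mem_insert_iff, Finset.mem_coe]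
      constructor
      · rintro (h | ⟨(rfl | h), hlt⟩)
        · exact Or.inl h
        · exact absurd hlt (not_lt.2 (hmax e he).le)
        · exact Or.inr ⟨h, hlt⟩
      · rintro (h | ⟨h, hlt⟩)
        · exact Or.inl h
        · exact Or.inr ⟨Or.inr h, hlt⟩
    have hunion : S ∪ ↑(insert a s) = insert a (S ∪ ↑s) := by
      rw [hins, Set.union_insert]
    have hfilter : (insert a s).filter
        (fun e => Quot.mk (G.step (S ∪ {f ∈ (↑(insert a s) : Set E) | f < e})) (G.src e)
          ≠ Quot.mk (G.step (S ∪ {f ∈ (↑(insert a s) : Set E) | f < e})) (G.tgt e))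
        = if (Quot.mk (G.step (S ∪ ↑s)) (G.src a) ≠ Quot.mk (G.step (S ∪ ↑s)) (G.tgt a))
          then insert a (s.filter (fun e =>
            Quot.mk (G.step (S ∪ {f ∈ (↑s : Set E) | f < e})) (G.src e)
              ≠ Quot.mk (G.step (S ∪ {f ∈ (↑s : Set E) | f < e})) (G.tgt e)))
          else s.filter (fun e =>
            Quot.mk (G.step (S ∪ {f ∈ (↑s : Set E) | f < e})) (G.src e)
              ≠ Quot.mk (G.step (S ∪ {f ∈ (↑s : Set E) | f < e})) (G.tgt e)) := by
      rw [Finset.filter_insert]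
      congr 1
      · rw [hconda]
      · exact congrArg (insert a) (Finset.filter_congr fun e he => by rw [hconde e he])
      · exact Finset.filter_congr fun e he => by rw [hconde e he]
    rw [hfilter, hunion]
    specialize ih hdisj'
    by_cases hP : Quot.mk (G.step (S ∪ ↑s)) (G.src a) ≠ Quot.mk (G.step (S ∪ ↑s)) (G.tgt a)
    · rw [if_pos hP, Finset.card_insert_of_notMem (fun h => has (Finset.mem_of_mem_filter a h))]
      have := G.kappa_insert_of_not_reach hP
      omega
    · rw [if_neg hP]
      push_neg at hP
      have := G.kappa_insert_of_reach hP
      omega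

end OrGraph

/-- Gordon–Traldi: `|Î(S) \ S| = κ(S) − κ` for every spanning
subgraph `S`. -/
theorem Iact_diff_ncard {V E : Type} [Fintype V] [Fintype E] [LinearOrder E]
    (G : OrGraph V E) (S : Set E) :
    (G.Iact S \ S).ncard = G.kappa S - G.kappa Set.univ := by
  classical
  set A : Finset E := Finset.univ.filter (fun e => e ∉ S) with hAdef
  have hA : (↑A : Set E) = {f | f ∉ S} := by ext f; simp [hAdef]
  have hdisj : Disjoint (↑A : Set E) S := by
    rw [hA]; exact Set.disjoint_left.2 fun f hf => hf
  have hcount := G.count_lemma S A hdisj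
  have hUset : ∀ e : E, S ∪ {f ∈ (↑A : Set E) | f < e} = S ∪ {f | f < e} := by
    intro e; rw [hA]; ext f
    simp only [Set.mem_union, Set.mem_setOf_eq]
    by_cases hf : f ∈ S <;> simp [hf]
  have hSA : S ∪ ↑A = (Set.univ : Set E) := by
    rw [hA]; ext f; by_cases hf : f ∈ S <;> simp [hf]
  rw [hSA] at hcount
  rw [G.Iact_diff_eq S]
  have hsetfin : {e | e ∉ S ∧ Quot.mk (G.step (S ∪ {f | f < e})) (G.src e)
      ≠ Quot.mk (G.step (S ∪ {f | f < e})) (G.tgt e)}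
      = ↑(A.filter (fun e => Quot.mk (G.step (S ∪ {f ∈ (↑A : Set E) | f < e})) (G.src e)
          ≠ Quot.mk (G.step (S ∪ {f ∈ (↑A : Set E) | f < e})) (G.tgt e))) := by
    ext e
    simp only [Set.mem_setOf_eq, Finset.coe_filter, hAdef, Finset.mem_filter,
      Finset.mem_univ, true_and]
    rw [hUset e]
  rw [hsetfin, Set.ncard_coe_finset]
  omega
end

section
/- Let G be a graph with n vertices and a total order on its edges. For every spanning subgraph S ⊆ E(G), the number of cycle active edges of S that belong to S equals κ(S) + |S| − n, where κ(S) is the number of connected components of (V(G), S). -/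
open scoped Classical

/-- A multigraph with a fixed reference orientation: each edge `e` has a
source `src e` and a target `tgt e` (the positive direction `e⁺ = (src e, tgt e)`). -/
structure OGraph (V E : Type) where
  src : E → V
  tgt : E → V

namespace OGraph

variable {V E : Type} (G : OGraph V E)

/-- Two vertices are joined by some edge of `S`. -/
def step (S : Set E) (a b : V) : Prop :=
  ∃ e ∈ S, (G.src e = a ∧ G.tgt e = b) ∨ (G.src e = b ∧ G.tgt e = a)

/-- `κ(S)`: the number of connected components of the spanning subgraph `(V, S)`. -/
noncomputable def kappa (S : Set E) : ℕ :=
  Nat.card (Quot (G.step S))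

/-- A cut of `G`: a minimal nonempty edge set whose removal increases the
number of connected components. -/
def IsCut (C : Set E) : Prop :=
  C.Nonempty ∧ G.kappa Cᶜ > G.kappa Set.univ ∧
    ∀ C' : Set E, C' ⊂ C → C'.Nonempty → ¬ (G.kappa C'ᶜ > G.kappa Set.univ)

/-- A cycle of `G`: a minimal nonempty edge set meeting no cut of `G` in
precisely one element. -/
def IsCycle (C : Set E) : Prop :=
  C.Nonempty ∧ (∀ Cu : Set E, G.IsCut Cu → (Cu ∩ C).ncard ≠ 1) ∧
    ∀ C' : Set E, C' ⊂ C → C'.Nonempty →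
      ¬ (∀ Cu : Set E, G.IsCut Cu → (Cu ∩ C').ncard ≠ 1)

/-- Head of edge `e` under orientation `O` (`O e = true` means the reference
direction `src e → tgt e`). -/
def ohead (O : E → Bool) (e : E) : V := if O e then G.tgt e else G.src e

/-- Tail of edge `e` under orientation `O`. -/
def otail (O : E → Bool) (e : E) : V := if O e then G.src e else G.tgt e

/-- Edge `e` crosses the vertex set `U` (exactly one endpoint in `U`). -/
def crossing (U : Set V) (e : E) : Prop := G.src e ∈ U ↔ G.tgt e ∉ U

/-- A directed cut of the orientation `O`: a cut all of whose edges are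
oriented consistently out of some vertex set `U`. -/
def IsDirCut (O : E → Bool) (C : Set E) : Prop :=
  G.IsCut C ∧ ∃ U : Set V, (∀ e, e ∈ C ↔ G.crossing U e) ∧ ∀ e ∈ C, G.otail O e ∈ U

/-- A directed cycle of the orientation `O`: a cycle oriented consistently,
i.e. in-degree equals out-degree at each vertex within the cycle. -/
def IsDirCycle (O : E → Bool) (C : Set E) : Prop :=
  G.IsCycle C ∧ ∀ v : V,
    {e ∈ C | G.ohead O e = v}.ncard = {e ∈ C | G.otail O e = v}.ncard

section Activities

variable [LinearOrder E]

/-- `Î(S)`: cut active edges of the spanning subgraph `S`. -/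
def Iact (S : Set E) : Set E :=
  {e | ∃ C : Set E, G.IsCut C ∧ e ∈ C ∧ (∀ f ∈ C, f ≠ e → f ∉ S) ∧ ∀ f ∈ C, e ≤ f}

/-- `L̂(S)`: cycle active edges of the spanning subgraph `S`. -/
def Lact (S : Set E) : Set E :=
  {e | ∃ C : Set E, G.IsCycle C ∧ e ∈ C ∧ (∀ f ∈ C, f = e ∨ f ∈ S) ∧ ∀ f ∈ C, e ≤ f}

/-- `I(O)`: cut active edges of the orientation `O`. -/
def Ior (O : E → Bool) : Set E :=
  {e | ∃ C : Set E, G.IsDirCut O C ∧ e ∈ C ∧ ∀ f ∈ C, e ≤ f}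

/-- `L(O)`: cycle active edges of the orientation `O`. -/
def Lor (O : E → Bool) : Set E :=
  {e | ∃ C : Set E, G.IsDirCycle O C ∧ e ∈ C ∧ ∀ f ∈ C, e ≤ f}

end Activities

/-- The Tutte polynomial via the corank-nullity expansion, evaluated in a
commutative ring. -/
noncomputable def tutte [Fintype V] [Fintype E] (R : Type) [CommRing R] (x y : R) : R :=
  ∑ S : Finset E, (x - 1) ^ (G.kappa ↑S - G.kappa Set.univ) *
    (y - 1) ^ (S.card + G.kappa ↑S - Fintype.card V)

/-! ### Fourientations.
A fourientation is `F : E → Bool × Bool`, recording whether `e⁺` resp. `e⁻`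
belongs to the fourientation. -/

/-- A potential cut of the fourientation `F`: a directed cut each of whose
edges is unoriented in `F` or oriented in the cut direction (out of `U`). -/
def PotCut (F : E → Bool × Bool) (C : Set E) : Prop :=
  G.IsCut C ∧ ∃ U : Set V, (∀ e, e ∈ C ↔ G.crossing U e) ∧
    ∀ e ∈ C, (G.src e ∈ U → (F e).2 = false) ∧ (G.src e ∉ U → (F e).1 = false)

/-- A potential cycle of the fourientation `F`, with cyclic direction `dir`:
a consistently directed cycle each of whose edges has its `dir`-direction
present in `F` (so each edge is bioriented or oriented in the cycle direction). -/
def PotCycle (F : E → Bool × Bool) (C : Set E) (dir : E → Bool) : Prop :=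
  G.IsCycle C ∧
    (∀ v : V, {e ∈ C | G.ohead dir e = v}.ncard = {e ∈ C | G.otail dir e = v}.ncard) ∧
    ∀ e ∈ C, (if dir e then (F e).1 else (F e).2) = true

/-- Add the direction `d` of edge `e` to the fourientation `F`. -/
def addDir [DecidableEq E] (F : E → Bool × Bool) (e : E) (d : Bool) : E → Bool × Bool :=
  Function.update F e (if d then (true, (F e).2) else ((F e).1, true))

/-- Remove the direction `d` of edge `e` from the fourientation `F`. -/
def remDir [DecidableEq E] (F : E → Bool × Bool) (e : E) (d : Bool) : E → Bool × Bool :=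
  Function.update F e (if d then (false, (F e).2) else ((F e).1, false))

/-- `ᵉO`: toggle the status of the edge `e` in the fourientation `F`. -/
def toggle [DecidableEq E] (F : E → Bool × Bool) (e : E) : E → Bool × Bool :=
  Function.update F e ((F e).2, (F e).1)

section FourActivities

variable [LinearOrder E]

/-- `I^o(O)`: oriented edges that are minimal in some potential cut. -/
def Io (F : E → Bool × Bool) : Set E :=
  {f | (F f).1 ≠ (F f).2 ∧ ∃ C : Set E, G.PotCut F C ∧ f ∈ C ∧ ∀ g ∈ C, f ≤ g}

/-- `L^o(O)`: oriented edges that are minimal in some potential cycle. -/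
def Lo (F : E → Bool × Bool) : Set E :=
  {f | (F f).1 ≠ (F f).2 ∧
    ∃ (C : Set E) (dir : E → Bool), G.PotCycle F C dir ∧ f ∈ C ∧ ∀ g ∈ C, f ≤ g}

/-- `I^u(O)`: unoriented edges `f` minimal in some potential cut of
`O ∪ {f^{σᵤ(f)}}`. -/
def Iu (σu : E → Bool) (F : E → Bool × Bool) : Set E :=
  {f | F f = (false, false) ∧
    ∃ C : Set E, G.PotCut (addDir F f (σu f)) C ∧ f ∈ C ∧ ∀ g ∈ C, f ≤ g}

/-- `L^b(O)`: bioriented edges `f` minimal in some potential cycle of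
`O \ {f^{σ_b(f)}}`. -/
def Lb (σb : E → Bool) (F : E → Bool × Bool) : Set E :=
  {f | F f = (true, true) ∧
    ∃ (C : Set E) (dir : E → Bool),
      G.PotCycle (remDir F f (σb f)) C dir ∧ f ∈ C ∧ ∀ g ∈ C, f ≤ g}

end FourActivities

/-- The deletion `G − e`. -/
def del (e : E) : OGraph V {f : E // f ≠ e} :=
  ⟨fun f => G.src f.1, fun f => G.tgt f.1⟩

/-- The contraction `G/e`: identify the endpoints of `e` and remove `e`. -/
def contr (e : E) : OGraph (Quot (fun a b => a = G.src e ∧ b = G.tgt e)) {f : E // f ≠ e} :=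
  ⟨fun f => Quot.mk _ (G.src f.1), fun f => Quot.mk _ (G.tgt f.1)⟩

/-! ### Potential walks in a fourientation. A walk step is a pair `(e, d)` of an
edge and a chosen direction (`d = true` for the reference direction). -/

/-- Tail of the directed edge `(e, d)`. -/
def ftail (p : E × Bool) : V := if p.2 then G.src p.1 else G.tgt p.1

/-- Head of the directed edge `(e, d)`. -/
def fhead (p : E × Bool) : V := if p.2 then G.tgt p.1 else G.src p.1

/-- The direction `d` of `e` is present in the fourientation `F`. -/
def present (F : E → Bool × Bool) (p : E × Bool) : Prop :=
  (if p.2 then (F p.1).1 else (F p.1).2) = true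

/-- A potential walk of the fourientation `F` from `a` to `b`: each step uses
a direction present in `F` (so each edge is bioriented or oriented
consistently with the walk). -/
def IsPWalk (F : E → Bool × Bool) : V → List (E × Bool) → V → Prop
  | a, [], b => a = b
  | a, p :: rest, b => G.ftail p = a ∧ present F p ∧ IsPWalk F (G.fhead p) rest b

/-- A potential path: a potential walk visiting pairwise distinct vertices. -/
def IsPPath (F : E → Bool × Bool) (a : V) (w : List (E × Bool)) (b : V) : Prop :=
  G.IsPWalk F a w b ∧ (a :: w.map G.fhead).Nodup

end OGraph

namespace OGraph

variable {V E : Type} {G : OGraph V E}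

def conn (G : OGraph V E) (S : Set E) : V → V → Prop := Relation.ReflTransGen (G.step S)

lemma step_symm {S : Set E} {a b : V} (h : G.step S a b) : G.step S b a := by
  obtain ⟨e, he, h | h⟩ := h
  · exact ⟨e, he, Or.inr h⟩
  · exact ⟨e, he, Or.inl h⟩

lemma conn_refl {S : Set E} (a : V) : G.conn S a a := Relation.ReflTransGen.refl

lemma conn_trans {S : Set E} {a b c : V} (h1 : G.conn S a b) (h2 : G.conn S b c) :
    G.conn S a c := Relation.ReflTransGen.trans h1 h2

lemma conn_symm {S : Set E} {a b : V} (h : G.conn S a b) : G.conn S b a := by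
  induction h with
  | refl => exact conn_refl a
  | tail _ hs ih => exact conn_trans (Relation.ReflTransGen.single (step_symm hs)) ih

lemma conn_of_step {S : Set E} {a b : V} (h : G.step S a b) : G.conn S a b :=
  Relation.ReflTransGen.single h

lemma conn_mono {A B : Set E} (hAB : A ⊆ B) {x y : V} (h : G.conn A x y) : G.conn B x y := by
  induction h with
  | refl => exact conn_refl x
  | tail _ hs ih =>
    exact conn_trans ih (conn_of_step (by obtain ⟨e, he, h⟩ := hs; exact ⟨e, hAB he, h⟩))

lemma conn_src_tgt {S : Set E} {e : E} (he : e ∈ S) : G.conn S (G.src e) (G.tgt e) :=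
  conn_of_step ⟨e, he, Or.inl ⟨rfl, rfl⟩⟩

lemma conn_insert_cases {A : Set E} {f : E} {x y : V} (h : G.conn (insert f A) x y) :
    G.conn A x y ∨ (G.conn A x (G.src f) ∧ G.conn A (G.tgt f) y) ∨
      (G.conn A x (G.tgt f) ∧ G.conn A (G.src f) y) := by
  induction h with
  | refl => exact Or.inl (conn_refl x)
  | tail _ hs ih =>
    obtain ⟨e, he, hor⟩ := hs
    rcases he with rfl | he
    · rcases hor with ⟨h1, h2⟩ | ⟨h1, h2⟩
      · subst h1; subst h2
        rcases ih with ih | ⟨ha, _⟩ | ⟨ha, _⟩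
        · exact Or.inr (Or.inl ⟨ih, conn_refl _⟩)
        · exact Or.inr (Or.inl ⟨ha, conn_refl _⟩)
        · exact Or.inl ha
      · subst h1; subst h2
        rcases ih with ih | ⟨ha, _⟩ | ⟨ha, _⟩
        · exact Or.inr (Or.inr ⟨ih, conn_refl _⟩)
        · exact Or.inl ha
        · exact Or.inr (Or.inr ⟨ha, conn_refl _⟩)
    · rcases ih with ih | ⟨ha, hb⟩ | ⟨ha, hb⟩
      · exact Or.inl (conn_trans ih (conn_of_step ⟨e, he, hor⟩))
      · exact Or.inr (Or.inl ⟨ha, conn_trans hb (conn_of_step ⟨e, he, hor⟩)⟩)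
      · exact Or.inr (Or.inr ⟨ha, conn_trans hb (conn_of_step ⟨e, he, hor⟩)⟩)


lemma conn_insert_iff_of_conn {A : Set E} {f : E} (h : G.conn A (G.src f) (G.tgt f)) {x y : V} :
    G.conn (insert f A) x y ↔ G.conn A x y := by
  constructor
  · intro hx
    rcases conn_insert_cases hx with h1 | ⟨h1, h2⟩ | ⟨h1, h2⟩
    · exact h1
    · exact conn_trans (conn_trans h1 h) h2
    · exact conn_trans (conn_trans h1 (conn_symm h)) h2
  · exact conn_mono (Set.subset_insert f A)

lemma conn_of_all_edges {A : Set E} (h : ∀ e : E, G.conn A (G.src e) (G.tgt e)) {B : Set E}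
    {x y : V} (hc : G.conn B x y) : G.conn A x y := by
  induction hc with
  | refl => exact conn_refl _
  | tail _ hs ih =>
    obtain ⟨e, _, hor⟩ := hs
    rcases hor with ⟨h1, h2⟩ | ⟨h1, h2⟩
    · subst h1; subst h2; exact conn_trans ih (h e)
    · subst h1; subst h2; exact conn_trans ih (conn_symm (h e))

lemma mk_eq_mk_iff {S : Set E} {x y : V} :
    Quot.mk (G.step S) x = Quot.mk (G.step S) y ↔ G.conn S x y := by
  rw [Quot.eq]
  constructor
  · intro h
    induction h with
    | rel _ _ h => exact conn_of_step h
    | refl => exact conn_refl _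
    | symm _ _ _ ih => exact conn_symm ih
    | trans _ _ _ _ _ ih1 ih2 => exact conn_trans ih1 ih2
  · intro h
    induction h with
    | refl => exact Relation.EqvGen.refl _
    | tail _ hs ih => exact Relation.EqvGen.trans _ _ _ ih (Relation.EqvGen.rel _ _ hs)

noncomputable def qmap (G : OGraph V E) {A B : Set E}
    (h : ∀ x y : V, G.conn A x y → G.conn B x y) : Quot (G.step A) → Quot (G.step B) :=
  Quot.lift (Quot.mk _) (fun a b hab => mk_eq_mk_iff.2 (h a b (conn_of_step hab)))

lemma qmap_surjective {A B : Set E} (h : ∀ x y : V, G.conn A x y → G.conn B x y) :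
    Function.Surjective (G.qmap h) := by
  intro q
  induction q using Quot.ind with
  | _ x => exact ⟨Quot.mk _ x, rfl⟩

section Finite
variable [Fintype V]

instance {S : Set E} : Finite (Quot (G.step S)) :=
  Finite.of_surjective (Quot.mk _) ((fun q => Quot.exists_rep q))

lemma kappa_le {A B : Set E} (h : ∀ x y : V, G.conn A x y → G.conn B x y) :
    G.kappa B ≤ G.kappa A :=
  Nat.card_le_card_of_surjective (G.qmap h) (qmap_surjective h)

lemma kappa_eq_of_conn {A B : Set E} (h : ∀ x y : V, G.conn A x y ↔ G.conn B x y) :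
    G.kappa A = G.kappa B :=
  le_antisymm (kappa_le (fun x y => (h x y).2)) (kappa_le (fun x y => (h x y).1))

lemma kappa_lt {A B : Set E} (h : ∀ x y : V, G.conn A x y → G.conn B x y)
    {x y : V} (hx : G.conn B x y) (hn : ¬ G.conn A x y) : G.kappa B < G.kappa A := by
  refine lt_of_le_of_ne (kappa_le h) (fun heq => hn ?_)
  have hbij : Function.Bijective (G.qmap h) :=
    (Nat.bijective_iff_surjective_and_card _).2 ⟨qmap_surjective h, heq.symm⟩
  have : G.qmap h (Quot.mk _ x) = G.qmap h (Quot.mk _ y) := mk_eq_mk_iff.2 hx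
  exact mk_eq_mk_iff.1 (hbij.1 this)

lemma kappa_empty : G.kappa (∅ : Set E) = Fintype.card V := by
  have hinj : Function.Injective (Quot.mk (G.step (∅ : Set E))) := by
    intro x y hxy
    have := mk_eq_mk_iff.1 hxy
    induction this with
    | refl => rfl
    | tail _ hs _ => exact absurd hs.choose_spec.1 (Set.notMem_empty _)
  rw [kappa, ← Nat.card_eq_fintype_card]
  exact (Nat.card_eq_of_bijective _ ⟨hinj, (fun q => Quot.exists_rep q)⟩).symm

lemma kappa_insert_of_not_conn {A : Set E} {f : E}
    (hn : ¬ G.conn A (G.src f) (G.tgt f)) :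
    G.kappa A = G.kappa (insert f A) + 1 := by
  classical
  set u := G.src f
  set v := G.tgt f
  have hmono : ∀ x y : V, G.conn A x y → G.conn (insert f A) x y :=
    fun x y => conn_mono (Set.subset_insert f A)
  set g := G.qmap hmono with hg
  set s : Set (Quot (G.step A)) := {Quot.mk _ v}ᶜ with hs
  have hus : (Quot.mk (G.step A) u) ∈ s := by
    simp only [hs, Set.mem_compl_iff, Set.mem_singleton_iff]
    exact fun h => hn (mk_eq_mk_iff.1 h)
  have hbij : Function.Bijective (fun a : s => g a.1) := by
    constructor
    · rintro ⟨a, ha⟩ ⟨b, hb⟩ hab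
      induction a using Quot.ind with | _ x =>
      induction b using Quot.ind with | _ y =>
      have hxy : G.conn (insert f A) x y := mk_eq_mk_iff.1 hab
      rcases conn_insert_cases hxy with h1 | ⟨h1, h2⟩ | ⟨h1, h2⟩
      · exact Subtype.ext (mk_eq_mk_iff.2 h1)
      · exact absurd (mk_eq_mk_iff.2 (conn_symm h2)) hb
      · exact absurd (mk_eq_mk_iff.2 h1) ha
    · intro q
      induction q using Quot.ind with | _ x =>
      by_cases hx : G.conn A x v
      · refine ⟨⟨Quot.mk _ u, hus⟩, ?_⟩
        show Quot.mk (G.step (insert f A)) u = Quot.mk _ x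
        refine mk_eq_mk_iff.2 ?_
        exact conn_trans (conn_src_tgt (Set.mem_insert f A))
          (conn_symm (hmono _ _ hx))
      · refine ⟨⟨Quot.mk _ x, fun h => hx (mk_eq_mk_iff.1 h)⟩, rfl⟩
  have hcard : Nat.card s = G.kappa (insert f A) := Nat.card_eq_of_bijective _ hbij
  have h1 : Nat.card (Quot (G.step A)) = s.ncard + 1 := by
    rw [Nat.card_coe_set_eq] at hcard
    have := Set.ncard_add_ncard_compl s
    rw [hs] at this ⊢
    simp only [compl_compl] at this
    have h2 : ({Quot.mk (G.step A) v} : Set (Quot (G.step A))).ncard = 1 :=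
      Set.ncard_singleton _
    omega
  rw [kappa, h1, ← Nat.card_coe_set_eq, hcard]

end Finite

lemma crossing_cases {U : Set V} {e : E} (hc : G.crossing U e) :
    (G.src e ∈ U ∧ G.tgt e ∉ U) ∨ (G.tgt e ∈ U ∧ G.src e ∉ U) := by
  unfold crossing at hc; tauto

lemma U_closed {U : Set V} {D : Set E} (hD : ∀ h ∈ D, ¬ G.crossing U h) {x y : V}
    (hc : G.conn D x y) : x ∈ U ↔ y ∈ U := by
  induction hc with
  | refl => rfl
  | tail _ hs ih =>
    obtain ⟨e, he, hor⟩ := hs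
    have hnc := hD e he
    unfold crossing at hnc
    have : G.src e ∈ U ↔ G.tgt e ∈ U := by tauto
    rcases hor with ⟨h1, h2⟩ | ⟨h1, h2⟩ <;> rw [ih] <;>
      [ (rw [← h1, ← h2]; exact this) ; (rw [← h1, ← h2]; exact this.symm) ]

section Finite
variable [Fintype V]

lemma cut_not_conn_compl {Cu : Set E} (hCu : G.IsCut Cu) {g : E} (hg : g ∈ Cu) :
    ¬ G.conn Cuᶜ (G.src g) (G.tgt g) := by
  intro hconn
  have heq : (Cu \ {g})ᶜ = insert g Cuᶜ := by
    ext x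
    simp only [Set.mem_compl_iff, Set.mem_diff, Set.mem_singleton_iff, Set.mem_insert_iff]
    tauto
  have hk : G.kappa (Cu \ {g})ᶜ = G.kappa Cuᶜ := by
    rw [heq]
    exact kappa_eq_of_conn (fun x y => conn_insert_iff_of_conn hconn)
  by_cases hne : (Cu \ {g}).Nonempty
  · exact hCu.2.2 (Cu \ {g}) (Set.sdiff_singleton_ssubset.mpr hg) hne (hk ▸ hCu.2.1)
  · rw [Set.not_nonempty_iff_eq_empty] at hne
    rw [hne, Set.compl_empty] at hk
    exact lt_irrefl _ (hk ▸ hCu.2.1)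

variable [Fintype E]

lemma fund_cut {A : Set E} {f : E} (hn : ¬ G.conn A (G.src f) (G.tgt f)) :
    ∃ Cu : Set E, G.IsCut Cu ∧ f ∈ Cu ∧ ∀ h ∈ A, h ∉ Cu := by
  classical
  obtain ⟨B, hBP, hBmax⟩ := Set.Finite.exists_maximalFor (fun B => B.ncard)
    {B : Set E | A ⊆ B ∧ ¬ G.conn B (G.src f) (G.tgt f)} (Set.toFinite _)
    ⟨A, subset_rfl, hn⟩
  dsimp only at hBmax
  obtain ⟨hAB, hBuv⟩ := hBP
  have hfB : G.conn (insert f B) (G.src f) (G.tgt f) := conn_src_tgt (Set.mem_insert f B)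
  have hspan : ∀ e : E, G.conn (insert f B) (G.src e) (G.tgt e) := by
    intro e
    by_cases heB : e ∈ B
    · exact conn_mono (Set.subset_insert _ _) (conn_src_tgt heB)
    by_cases hc : G.conn (insert e B) (G.src f) (G.tgt f)
    · rcases conn_insert_cases hc with h1 | ⟨h1, h2⟩ | ⟨h1, h2⟩
      · exact absurd h1 hBuv
      · exact ((conn_mono (Set.subset_insert f B) (conn_symm h1)).trans hfB).trans
          (conn_mono (Set.subset_insert f B) (conn_symm h2))
      · exact ((conn_mono (Set.subset_insert f B) h2).trans (conn_symm hfB)).trans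
          (conn_mono (Set.subset_insert f B) h1)
    · exfalso
      have hmem : insert e B ∈ {B : Set E | A ⊆ B ∧ ¬ G.conn B (G.src f) (G.tgt f)} :=
        ⟨hAB.trans (Set.subset_insert _ _), hc⟩
      have hcard := Set.ncard_insert_of_notMem heB (Set.toFinite B)
      have := hBmax hmem (by omega)
      omega
  set U : Set V := {x | G.conn B (G.src f) x} with hU
  have huU : G.src f ∈ U := conn_refl _
  have hvU : G.tgt f ∉ U := hBuv
  have hBnc : ∀ h ∈ B, ¬ G.crossing U h := by
    intro h hh hcr
    have h1 : G.src h ∈ U ↔ G.tgt h ∈ U := by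
      constructor
      · exact fun hx => conn_trans hx (conn_src_tgt hh)
      · exact fun hx => conn_trans hx (conn_symm (conn_src_tgt hh))
    unfold crossing at hcr; tauto
  set Cu : Set E := {h | G.crossing U h} with hCu
  have hfCu : f ∈ Cu := by
    show G.crossing U f
    unfold crossing; tauto
  have hACu : ∀ h ∈ A, h ∉ Cu := fun h hh => hBnc h (hAB hh)
  have hBsub : ∀ C'' : Set E, C'' ⊆ Cu → B ⊆ C''ᶜ := by
    intro C'' hsub h hh
    exact fun hmem => hBnc h hh (hsub hmem)
  refine ⟨Cu, ⟨⟨f, hfCu⟩, ?_, ?_⟩, hfCu, hACu⟩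
  · refine kappa_lt (fun x y h => conn_mono (Set.subset_univ _) h)
      (conn_src_tgt (Set.mem_univ f)) (fun hconn => ?_)
    have := U_closed (U := U) (fun h hh => hh) hconn
    exact hvU (this.1 huU)
  · intro C'' hsub hne hgt
    obtain ⟨g, hgCu, hgC⟩ := Set.exists_of_ssubset hsub
    have hBC : B ⊆ C''ᶜ := hBsub C'' hsub.subset
    obtain ⟨ag, bg, hgstep, hagU, hbgU⟩ :
        ∃ a b : V, ((G.src g = a ∧ G.tgt g = b) ∨ (G.src g = b ∧ G.tgt g = a)) ∧
          a ∈ U ∧ b ∉ U := by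
      rcases crossing_cases hgCu with ⟨h1, h2⟩ | ⟨h1, h2⟩
      · exact ⟨_, _, Or.inl ⟨rfl, rfl⟩, h1, h2⟩
      · exact ⟨_, _, Or.inr ⟨rfl, rfl⟩, h1, h2⟩
    have hinU : ∀ x y : V, x ∈ U → y ∈ U → G.conn C''ᶜ x y := by
      intro x y hx hy
      exact conn_mono hBC (conn_trans (conn_symm hx) hy)
    have houtU : ∀ x y : V, x ∉ U → y ∉ U → G.conn (insert f B) x y → G.conn C''ᶜ x y := by
      intro x y hx hy hc
      rcases conn_insert_cases hc with h1 | ⟨h1, h2⟩ | ⟨h1, h2⟩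
      · exact conn_mono hBC h1
      · exact absurd (conn_symm h1) hx
      · exact absurd h2 hy
    have hT : ∀ x y : V, G.conn Set.univ x y → G.conn (insert f B) x y :=
      fun x y => conn_of_all_edges hspan
    have hall : ∀ e : E, G.conn C''ᶜ (G.src e) (G.tgt e) := by
      intro e
      by_cases heC : e ∈ C''
      · have hecr : G.crossing U e := hsub.subset heC
        have hgstep' : G.step C''ᶜ ag bg := ⟨g, hgC, hgstep⟩
        have key : ∀ a b : V, a ∈ U → b ∉ U → G.conn Set.univ a b → G.conn C''ᶜ a b := by
          intro a b ha hb hconnab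
          have h1 : G.conn C''ᶜ a ag := hinU a ag ha hagU
          have h2 : G.conn Set.univ bg b := by
            have hba : G.conn Set.univ bg ag := conn_symm (conn_of_step
              ⟨g, Set.mem_univ g, hgstep⟩)
            have hab : G.conn Set.univ ag a := conn_mono (Set.subset_univ _)
              (conn_trans (conn_symm hagU) ha)
            exact (hba.trans hab).trans hconnab
          exact (h1.trans (conn_of_step hgstep')).trans (houtU bg b hbgU hb (hT _ _ h2))
        rcases crossing_cases hecr with ⟨h1, h2⟩ | ⟨h1, h2⟩
        · exact key _ _ h1 h2 (conn_src_tgt (Set.mem_univ e))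
        · exact conn_symm (key _ _ h1 h2 (conn_symm (conn_src_tgt (Set.mem_univ e))))
      · exact conn_src_tgt (by exact heC)
    have : G.kappa C''ᶜ ≤ G.kappa Set.univ :=
      kappa_le (fun x y h => conn_of_all_edges hall h)
    omega

lemma cycle_conn {C : Set E} (hC : G.IsCycle C) {e : E} (he : e ∈ C) :
    G.conn (C \ {e}) (G.src e) (G.tgt e) := by
  by_contra hn
  obtain ⟨Cu, hCu, heCu, hdisj⟩ := fund_cut hn
  refine hC.2.1 Cu hCu ?_
  have : Cu ∩ C = {e} := by
    ext h
    simp only [Set.mem_inter_iff, Set.mem_singleton_iff]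
    constructor
    · rintro ⟨h1, h2⟩
      by_contra hne
      exact hdisj h ⟨h2, hne⟩ h1
    · rintro rfl; exact ⟨heCu, he⟩
  rw [this, Set.ncard_singleton]

lemma exists_cycle {A : Set E} {e : E} (he : e ∉ A)
    (hconn : G.conn A (G.src e) (G.tgt e)) :
    ∃ C : Set E, G.IsCycle C ∧ e ∈ C ∧ C ⊆ insert e A := by
  classical
  set P : Set (Set E) := {C | e ∈ C ∧ C ⊆ insert e A ∧ G.conn (C \ {e}) (G.src e) (G.tgt e)}
    with hP
  have hPne : insert e A ∈ P := by
    refine ⟨Set.mem_insert e A, subset_rfl, ?_⟩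
    rw [Set.insert_diff_self_of_notMem he]
    exact hconn
  obtain ⟨C, hCP, hCmin⟩ := Set.Finite.exists_minimalFor (fun C => C.ncard) P
    (Set.toFinite _) ⟨_, hPne⟩
  dsimp only at hCmin
  obtain ⟨heC, hCsub, hCconn⟩ := hCP
  have hmin : ∀ C' ∈ P, ¬ C' ⊂ C := by
    intro C' hC' hss
    have h1 := Set.ncard_lt_ncard hss (Set.toFinite C)
    have := hCmin hC' (le_of_lt h1)
    omega
  refine ⟨C, ⟨⟨e, heC⟩, ?_, ?_⟩, heC, hCsub⟩
  · -- meets no cut in exactly one edge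
    intro Cu hCu hone
    obtain ⟨g, hgone⟩ := Set.ncard_eq_one.mp hone
    have hgCu : g ∈ Cu := by
      have : g ∈ Cu ∩ C := hgone ▸ rfl
      exact this.1
    have hgC : g ∈ C := by
      have : g ∈ Cu ∩ C := hgone ▸ rfl
      exact this.2
    have hnotCu : ∀ h ∈ C, h ≠ g → h ∉ Cu := by
      intro h hh hne hmem
      have : h ∈ Cu ∩ C := ⟨hmem, hh⟩
      rw [hgone] at this
      exact hne this
    by_cases hge : g = e
    · subst hge
      refine cut_not_conn_compl hCu hgCu (conn_mono ?_ hCconn)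
      intro h hh
      exact hnotCu h hh.1 hh.2
    · -- g ≠ e
      have hgC' : g ∈ C \ {e} := ⟨hgC, hge⟩
      set D : Set E := (C \ {e}) \ {g} with hD
      have hDconn : ¬ G.conn D (G.src e) (G.tgt e) := by
        intro hc
        refine hmin (C \ {g}) ⟨⟨heC, fun h => hge (h.symm)⟩,
          (Set.diff_subset).trans hCsub, ?_⟩ (Set.sdiff_singleton_ssubset.mpr hgC)
        rwa [Set.diff_diff_comm]
      have hCe : C \ {e} = insert g D := by
        rw [hD, Set.insert_diff_singleton, Set.insert_eq_self.mpr hgC']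
      rw [hCe] at hCconn
      have hgconn : G.conn (C \ {g}) (G.src g) (G.tgt g) := by
        have hDsub : D ⊆ C \ {g} := fun h hh => ⟨hh.1.1, hh.2⟩
        have hestep : G.conn (C \ {g}) (G.src e) (G.tgt e) :=
          conn_src_tgt (⟨heC, fun h => hge h.symm⟩)
        rcases conn_insert_cases hCconn with h1 | ⟨h1, h2⟩ | ⟨h1, h2⟩
        · exact absurd h1 hDconn
        · exact ((conn_mono hDsub (conn_symm h1)).trans hestep).trans
            (conn_mono hDsub (conn_symm h2))
        · exact ((conn_mono hDsub h2).trans (conn_symm hestep)).trans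
            (conn_mono hDsub h1)
      refine cut_not_conn_compl hCu hgCu (conn_mono ?_ hgconn)
      intro h hh
      exact hnotCu h hh.1 hh.2 
  · -- minimality
    intro C' hsub hne hall
    by_cases heC' : e ∈ C'
    · by_cases hc : G.conn (C' \ {e}) (G.src e) (G.tgt e)
      · exact hmin C' ⟨heC', hsub.subset.trans hCsub, hc⟩ hsub
      · obtain ⟨Cu, hCu, heCu, hdisj⟩ := fund_cut hc
        refine hall Cu hCu ?_
        have : Cu ∩ C' = {e} := by
          ext h
          simp only [Set.mem_inter_iff, Set.mem_singleton_iff]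
          constructor
          · rintro ⟨h1, h2⟩
            by_contra hne2
            exact hdisj h ⟨h2, hne2⟩ h1
          · rintro rfl; exact ⟨heCu, heC'⟩
        rw [this, Set.ncard_singleton]
    · obtain ⟨h, hhC'⟩ := hne
      by_cases hc : G.conn (C' \ {h}) (G.src h) (G.tgt h)
      · -- C \ {h} ∈ P, contradiction with minimality
        have hhC : h ∈ C := hsub.subset hhC'
        have hhe : h ≠ e := fun hhe => heC' (hhe ▸ hhC')
        have h1 : h ∈ C \ {e} := ⟨hhC, hhe⟩
        have hCe : C \ {e} = insert h ((C \ {e}) \ {h}) := by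
          rw [Set.insert_diff_singleton, Set.insert_eq_self.mpr h1]
        have hsub2 : C' \ {h} ⊆ (C \ {e}) \ {h} := by
          intro x hx
          exact ⟨⟨hsub.subset hx.1, fun hxe => heC' (hxe ▸ hx.1)⟩, hx.2⟩
        have hconn2 : G.conn ((C \ {e}) \ {h}) (G.src h) (G.tgt h) :=
          conn_mono hsub2 hc
        have : G.conn ((C \ {e}) \ {h}) (G.src e) (G.tgt e) := by
          rw [hCe] at hCconn
          exact (conn_insert_iff_of_conn hconn2).mp hCconn
        refine hmin (C \ {h}) ⟨⟨heC, fun hx => hhe hx.symm⟩,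
          (Set.diff_subset).trans hCsub, ?_⟩ (Set.sdiff_singleton_ssubset.mpr hhC)
        rwa [Set.diff_diff_comm]
      · obtain ⟨Cu, hCu, hhCu, hdisj⟩ := fund_cut hc
        refine hall Cu hCu ?_
        have : Cu ∩ C' = {h} := by
          ext x
          simp only [Set.mem_inter_iff, Set.mem_singleton_iff]
          constructor
          · rintro ⟨h1, h2⟩
            by_contra hne2
            exact hdisj x ⟨h2, hne2⟩ h1
          · rintro rfl; exact ⟨hhCu, hhC'⟩
        rw [this, Set.ncard_singleton]

lemma lact_mem_iff [LinearOrder E] {S : Set E} {e : E} :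
    e ∈ G.Lact S ∩ S ↔ e ∈ S ∧ G.conn {f ∈ S | e < f} (G.src e) (G.tgt e) := by
  constructor
  · rintro ⟨⟨C, hCyc, heC, hCS, hCle⟩, heS⟩
    refine ⟨heS, conn_mono ?_ (cycle_conn hCyc heC)⟩
    intro h hh
    rcases hCS h hh.1 with rfl | hhS
    · exact absurd rfl hh.2
    · exact ⟨hhS, lt_of_le_of_ne (hCle h hh.1) (Ne.symm hh.2)⟩
  · rintro ⟨heS, hconn⟩
    have heA : e ∉ {f ∈ S | e < f} := fun h => lt_irrefl e h.2
    obtain ⟨C, hCyc, heC, hCsub⟩ := exists_cycle heA hconn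
    refine ⟨⟨C, hCyc, heC, ?_, ?_⟩, heS⟩
    · intro f hf
      rcases hCsub hf with rfl | h
      · exact Or.inl rfl
      · exact Or.inr h.1
    · intro f hf
      rcases hCsub hf with rfl | h
      · exact le_refl _
      · exact le_of_lt h.2

lemma main_count [LinearOrder E] :
    ∀ (n : ℕ) (S : Set E), S.ncard = n →
      (G.Lact S ∩ S).ncard + Fintype.card V = G.kappa S + S.ncard := by
  intro n
  induction n using Nat.strong_induction_on with
  | _ n ih =>
  intro S hSn
  rcases Set.eq_empty_or_nonempty S with rfl | hne
  · rw [Set.inter_empty, Set.ncard_empty, kappa_empty]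
    omega
  obtain ⟨m, hmS, hmin⟩ := Set.exists_min_image S id (Set.toFinite S) hne
  simp only [id] at hmin
  set S' : Set E := S \ {m} with hS'
  have hmS' : m ∉ S' := fun h => h.2 rfl
  have hins : insert m S' = S := by
    rw [hS', Set.insert_diff_singleton, Set.insert_eq_self.mpr hmS]
  have hcard : S.ncard = S'.ncard + 1 := by
    rw [← hins, Set.ncard_insert_of_notMem hmS' (Set.toFinite S')]
  have hfilter : {f ∈ S | m < f} = S' := by
    ext f
    simp only [Set.mem_setOf_eq, hS', Set.mem_diff, Set.mem_singleton_iff]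
    constructor
    · rintro ⟨h1, h2⟩
      exact ⟨h1, fun hh => lt_irrefl m (hh ▸ h2)⟩
    · rintro ⟨h1, h2⟩
      exact ⟨h1, lt_of_le_of_ne (hmin f h1) (Ne.symm h2)⟩
  have hiff : ∀ e, e ≠ m → (e ∈ G.Lact S ∩ S ↔ e ∈ G.Lact S' ∩ S') := by
    intro e hem
    rw [lact_mem_iff, lact_mem_iff]
    have himp : e ∈ S → {f ∈ S | e < f} = {f ∈ S' | e < f} := by
      intro heS
      ext f
      simp only [Set.mem_setOf_eq, hS', Set.mem_diff, Set.mem_singleton_iff]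
      constructor
      · rintro ⟨h1, h2⟩
        refine ⟨⟨h1, fun hh => ?_⟩, h2⟩
        subst hh
        exact absurd (lt_of_le_of_lt (hmin e heS) h2) (lt_irrefl f)
      · rintro ⟨⟨h1, _⟩, h2⟩
        exact ⟨h1, h2⟩
    constructor
    · rintro ⟨heS, hc⟩
      exact ⟨⟨heS, hem⟩, (himp heS) ▸ hc⟩
    · rintro ⟨heS', hc⟩
      exact ⟨heS'.1, (himp heS'.1) ▸ hc⟩
  have hmmem : m ∈ G.Lact S ∩ S ↔ G.conn S' (G.src m) (G.tgt m) := by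
    rw [lact_mem_iff, hfilter]
    exact ⟨fun h => h.2, fun h => ⟨hmS, h⟩⟩
  have hIH := ih S'.ncard (by omega) S' rfl
  by_cases hc : G.conn S' (G.src m) (G.tgt m)
  · have hset : G.Lact S ∩ S = insert m (G.Lact S' ∩ S') := by
      ext e
      rw [Set.mem_insert_iff]
      by_cases hem : e = m
      · subst hem
        simp only [true_or, iff_true]
        exact hmmem.mpr hc
      · rw [hiff e hem]
        simp only [hem, false_or]
    have hk : G.kappa S = G.kappa S' := by
      rw [← hins]
      exact kappa_eq_of_conn (fun x y => conn_insert_iff_of_conn hc)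
    have hmnot : m ∉ G.Lact S' ∩ S' := fun h => hmS' h.2
    rw [hset, Set.ncard_insert_of_notMem hmnot (Set.toFinite _), hk]
    omega
  · have hset : G.Lact S ∩ S = G.Lact S' ∩ S' := by
      ext e
      by_cases hem : e = m
      · subst hem
        simp only [iff_false_intro (fun h => hc (hmmem.mp h)), false_iff]
        exact fun h => hmS' h.2
      · exact hiff e hem
    have hk : G.kappa S' = G.kappa S + 1 := by
      rw [← hins]
      exact kappa_insert_of_not_conn hc
    rw [hset]
    omega

end Finite

end OGraph

theorem Lact_inter_ncard_aux {V E : Type} [Fintype V] [Fintype E] [LinearOrder E]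
    (G : OGraph V E) (S : Set E) :
    (G.Lact S ∩ S).ncard = G.kappa S + S.ncard - Fintype.card V := by
  have := OGraph.main_count (G := G) S.ncard S rfl
  omega


/-- Gordon–Traldi: `|L̂(S) ∩ S| = κ(S) + |S| − n` for every
spanning subgraph `S`, where `n = |V(G)|`. -/
theorem Lact_inter_ncard {V E : Type} [Fintype V] [Fintype E] [LinearOrder E]
    (G : OGraph V E) (S : Set E) :
    (G.Lact S ∩ S).ncard = G.kappa S + S.ncard - Fintype.card V :=
  Lact_inter_ncard_aux G S
end

section
/- Let G be a graph with a total order on its edges. For every spanning subgraph S ⊆ E(G), the set of cut active edges and the set of cycle active edges of S are disjoint: Î(S) ∩ L̂(S) = ∅. -/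
open scoped Classical

/-- the cut active and cycle active edges of any spanning
subgraph are disjoint: `Î(S) ∩ L̂(S) = ∅`. -/
theorem Iact_inter_Lact {V E : Type} [Fintype V] [Fintype E] [LinearOrder E]
    (G : OrGraph V E) (S : Set E) :
    G.Iact S ∩ G.Lact S = ∅ := by
  ext e
  simp only [Set.mem_inter_iff, Set.mem_empty_iff_false, iff_false, not_and]
  rintro ⟨C, hC, heC, hCS, _⟩ ⟨C', hC', heC', hC'S, _⟩
  have hinter : C ∩ C' = {e} := by
    ext f
    simp only [Set.mem_inter_iff, Set.mem_singleton_iff]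
    constructor
    · rintro ⟨hfC, hfC'⟩
      by_contra hne
      exact hCS f hfC hne ((hC'S f hfC').resolve_left hne)
    · rintro rfl; exact ⟨heC, heC'⟩
  exact hC'.2.1 C hC (by rw [hinter, Set.ncard_singleton])
end
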